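/- arXiv:2406.16234 — 3 statements merged into one kernel-verified Lean document; each statement's English description precedes it below -/
import Mathlib

section
/- Multiple robustness of the one-step functional (the 'k+1 chances of consistency' property): fix an integer k ≥ 1, adopt the core setup and the candidate-nuisance setup with Y_j integrable. Suppose there exists m₀ ∈ {0, 1, …, k} such that (i) for every m with 1 ≤ m ≤ m₀, p̂_m = p_m a.s. under P(·|B_{m−1}), and (ii) for every m with m₀ < m ≤ k, Q̂^m = Q^{j,k,m} a.s. under P(·|B_{m−1}). Then E_P[ φ̃ ] = φ_{j,k}, where φ̃ := Σ_{m=1}^k 1_{B_m} ĝ_m^{−1}(Q̂^{m+1} − Q̂^m) + Q̂^1. In particular, correct specification of all outcome regressions (m₀ = 0) or of all propensity scores (m₀ = k) each suffices for unbiasedness. -/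
open MeasureTheory ProbabilityTheory

section AuxMR

variable {Ω : Type*} [m0 : MeasurableSpace Ω]

lemma auxMR_integral_cond (P : Measure Ω) (s : Set Ω) (f : Ω → ℝ) :
    ∫ ω, f ω ∂(P[|s]) = (P s).toReal⁻¹ * ∫ ω in s, f ω ∂P := by
  rw [ProbabilityTheory.cond, integral_smul_measure, ENNReal.toReal_inv, smul_eq_mul]

lemma auxMR_setIntegral_cond (P : Measure Ω) {s : Set Ω} (h0 : P s ≠ 0) (hfin : P s ≠ ⊤)
    (f : Ω → ℝ) : ∫ ω in s, f ω ∂P = (P s).toReal * ∫ ω, f ω ∂(P[|s]) := by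
  rw [auxMR_integral_cond, ← mul_assoc,
    mul_inv_cancel₀ (ENNReal.toReal_ne_zero.2 ⟨h0, hfin⟩), one_mul]

lemma auxMR_integrable_cond_iff (P : Measure Ω) {s : Set Ω} (h0 : P s ≠ 0) (hfin : P s ≠ ⊤)
    (f : Ω → ℝ) : Integrable f (P[|s]) ↔ IntegrableOn f s P := by
  rw [ProbabilityTheory.cond]
  exact integrable_smul_measure (ENNReal.inv_ne_zero.2 hfin) (ENNReal.inv_ne_top.2 h0)

lemma auxMR_cond_ac {P : Measure Ω} {s t : Set Ω} (hts : t ⊆ s) (hsfin : P s ≠ ⊤)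
    (hsm : MeasurableSet s) (htm : MeasurableSet t) : P[|t] ≪ P[|s] := by
  refine Measure.AbsolutelyContinuous.mk fun N hN h0 => ?_
  rw [cond_apply hsm] at h0
  have hsN : P (s ∩ N) = 0 := by
    rcases mul_eq_zero.1 h0 with h | h
    · exact absurd h (ENNReal.inv_ne_zero.2 hsfin)
    · exact h
  have htN : P (t ∩ N) = 0 :=
    measure_mono_null (Set.inter_subset_inter_left _ hts) hsN
  rw [cond_apply htm, htN, mul_zero]

lemma auxMR_pullout (P : Measure Ω) [IsFiniteMeasure P] {m : MeasurableSpace Ω} (hm : m ≤ m0)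
    {f X : Ω → ℝ} (hf : Measurable[m] f)
    (hfX : Integrable (fun ω => f ω * X ω) P) (hX : Integrable X P) :
    ∫ ω, f ω * X ω ∂P = ∫ ω, f ω * (P[X|m]) ω ∂P ∧
      Integrable (fun ω => f ω * (P[X|m]) ω) P := by
  have hpull : P[(fun ω => f ω * X ω)|m] =ᵐ[P] fun ω => f ω * (P[X|m]) ω :=
    condExp_mul_of_stronglyMeasurable_left hf.stronglyMeasurable hfX hX
  haveI : SigmaFinite (P.trim hm) := inferInstance
  refine ⟨?_, integrable_condExp.congr hpull⟩
  calc ∫ ω, f ω * X ω ∂P = ∫ ω, (P[(fun ω => f ω * X ω)|m]) ω ∂P :=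
        (integral_condExp hm).symm
    _ = ∫ ω, f ω * (P[X|m]) ω ∂P := integral_congr_ae hpull

lemma auxMR_integrable_of_bound (P : Measure Ω) [IsFiniteMeasure P] {f : Ω → ℝ}
    (hf : AEStronglyMeasurable f P) {C : ℝ} (hC : ∀ᵐ ω ∂P, |f ω| ≤ C) :
    Integrable f P :=
  (integrable_const C).mono' hf (by simpa [Real.norm_eq_abs] using hC)

lemma auxMR_abs_mul_le {a b A B : ℝ} (ha : |a| ≤ A) (hb : |b| ≤ B) : |a * b| ≤ A * B := by
  rw [abs_mul]
  exact mul_le_mul ha hb (abs_nonneg _) ((abs_nonneg a).trans ha)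

end AuxMR

/-- Multiple robustness of the one-step functional (the "k+1 chances of
consistency" property): under the core setup, the true recursion `Q`
(`φ_{j,k} = E_P[Q 1]`), and the candidate-nuisance setup, if there is `m₀ ∈ {0,…,k}`
such that the candidate propensities are correct (`phat m = p m` a.s. under
`P[|B (m-1)]`) for all `1 ≤ m ≤ m₀` and the candidate outcome regressions are correct
(`Qhat m = Q m` a.s. under `P[|B (m-1)]`) for all `m₀ < m ≤ k`, then
`E_P[φ̃] = φ_{j,k}` where
`φ̃ = Σ_{m=1}^k 1_{B m} (ghat m)⁻¹ (Qhat (m+1) - Qhat m) + Qhat 1`. -/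
theorem multiple_robustness
    {Ω : Type*} [inst : MeasurableSpace Ω] (P : Measure Ω) [IsProbabilityMeasure P]
    (k : ℕ) (hk : 1 ≤ k)
    (B : ℕ → Set Ω)
    (hBmeas : ∀ m, m ≤ k → MeasurableSet (B m))
    (hBmono : ∀ m, m < k → B (m + 1) ⊆ B m)
    (hB0 : P (B 0) = 1)
    (hBk : 0 < P (B k))
    (𝒲 : ℕ → MeasurableSpace Ω)
    (h𝒲le : ∀ m, 1 ≤ m → m ≤ k → 𝒲 m ≤ inst)
    (h𝒲mono : ∀ m, 1 ≤ m → m < k → 𝒲 m ≤ 𝒲 (m + 1))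
    (ε : ℝ) (hε : 0 < ε)
    (p : ℕ → Ω → ℝ)
    (hpmeas : ∀ m, 1 ≤ m → m ≤ k → Measurable[𝒲 m] (p m))
    (hpver : ∀ m, 1 ≤ m → m ≤ k →
      p m =ᵐ[P[|B (m - 1)]] (P[|B (m - 1)])[(B m).indicator (fun _ => (1 : ℝ))|𝒲 m])
    (hppos : ∀ m, 1 ≤ m → m ≤ k → ∀ᵐ ω ∂P, ε ≤ p m ω)
    (g : ℕ → Ω → ℝ)
    (hg : ∀ m ω, g m ω = ∏ s ∈ Finset.Icc 1 m, p s ω)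
    (Y : Ω → ℝ) (hYint : Integrable Y P)
    (Q : ℕ → Ω → ℝ)
    (hQtop : Q (k + 1) = Y)
    (hQmeas : ∀ m, 1 ≤ m → m ≤ k → Measurable[𝒲 m] (Q m))
    (hQver : ∀ m, 1 ≤ m → m ≤ k → Q m =ᵐ[P[|B m]] (P[|B m])[Q (m + 1)|𝒲 m])
    (phat : ℕ → Ω → ℝ)
    (hphatmeas : ∀ m, 1 ≤ m → m ≤ k → Measurable[𝒲 m] (phat m))
    (hphatbd : ∀ m, 1 ≤ m → m ≤ k → ∀ᵐ ω ∂P, ε ≤ phat m ω ∧ phat m ω ≤ 1)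
    (ghat : ℕ → Ω → ℝ)
    (hghat : ∀ m ω, ghat m ω = ∏ s ∈ Finset.Icc 1 m, phat s ω)
    (Qhat : ℕ → Ω → ℝ)
    (hQhattop : Qhat (k + 1) = Y)
    (hQhatmeas : ∀ m, 1 ≤ m → m ≤ k → Measurable[𝒲 m] (Qhat m))
    (hQhatbd : ∀ m, 1 ≤ m → m ≤ k → ∃ C, ∀ ω, |Qhat m ω| ≤ C)
    (m₀ : ℕ) (hm₀ : m₀ ≤ k)
    (hpcorrect : ∀ m, 1 ≤ m → m ≤ m₀ → phat m =ᵐ[P[|B (m - 1)]] p m)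
    (hQcorrect : ∀ m, m₀ < m → m ≤ k → Qhat m =ᵐ[P[|B (m - 1)]] Q m) :
    ∫ ω, ((∑ m ∈ Finset.Icc 1 k,
        (B m).indicator (fun ω' => (ghat m ω')⁻¹ * (Qhat (m + 1) ω' - Qhat m ω')) ω)
      + Qhat 1 ω) ∂P = ∫ ω, Q 1 ω ∂P := by
  classical
  -- ## Basic consequences of the setup
  have hBfin : ∀ s : Set Ω, P s ≠ ⊤ := fun s => measure_ne_top P s
  have hBchain : ∀ a b : ℕ, a ≤ b → b ≤ k → B b ⊆ B a := by
    intro a b hab hbk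
    induction b with
    | zero => obtain rfl : a = 0 := Nat.le_zero.mp hab; exact subset_rfl
    | succ n ih =>
      rcases Nat.lt_or_ge a (n + 1) with h | h
      · exact (hBmono n (by omega)).trans (ih (by omega) (by omega))
      · obtain rfl : a = n + 1 := le_antisymm hab h
        exact subset_rfl
  have hBpos : ∀ m : ℕ, m ≤ k → P (B m) ≠ 0 := by
    intro m hm h0
    have hle : P (B k) ≤ P (B m) := measure_mono (hBchain m k hm le_rfl)
    exact hBk.ne' (le_antisymm (h0 ▸ hle) zero_le)
  have h𝒲chain : ∀ a b : ℕ, 1 ≤ a → a ≤ b → b ≤ k → 𝒲 a ≤ 𝒲 b := by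
    intro a b ha hab hbk
    induction b with
    | zero => omega
    | succ n ih =>
      rcases Nat.lt_or_ge a (n + 1) with h | h
      · exact (ih (by omega) (by omega)).trans (h𝒲mono n (by omega) (by omega))
      · obtain rfl : a = n + 1 := le_antisymm hab h
        exact le_rfl
  -- measurability of the products
  have hgmeas : ∀ a b : ℕ, a ≤ b → 1 ≤ b → b ≤ k → Measurable[𝒲 b] (g a) := by
    intro a b hab hb1 hbk
    have hfe : g a = fun ω => ∏ s ∈ Finset.Icc 1 a, p s ω := funext fun ω => hg a ω
    rw [hfe]
    refine Finset.measurable_prod _ fun s hs => ?_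
    obtain ⟨h1, h2⟩ := Finset.mem_Icc.mp hs
    exact (hpmeas s h1 (by omega)).mono (h𝒲chain s b h1 (by omega) hbk) le_rfl
  have hghatmeas' : ∀ a b : ℕ, a ≤ b → 1 ≤ b → b ≤ k → Measurable[𝒲 b] (ghat a) := by
    intro a b hab hb1 hbk
    have hfe : ghat a = fun ω => ∏ s ∈ Finset.Icc 1 a, phat s ω := funext fun ω => hghat a ω
    rw [hfe]
    refine Finset.measurable_prod _ fun s hs => ?_
    obtain ⟨h1, h2⟩ := Finset.mem_Icc.mp hs
    exact (hphatmeas s h1 (by omega)).mono (h𝒲chain s b h1 (by omega) hbk) le_rfl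
  have hghatmeasP : ∀ a : ℕ, a ≤ k → Measurable (ghat a) := by
    intro a hak
    have hfe : ghat a = fun ω => ∏ s ∈ Finset.Icc 1 a, phat s ω := funext fun ω => hghat a ω
    rw [hfe]
    refine Finset.measurable_prod _ fun s hs => ?_
    obtain ⟨h1, h2⟩ := Finset.mem_Icc.mp hs
    exact (hphatmeas s h1 (by omega)).mono (h𝒲le s h1 (by omega)) le_rfl
  have hεm : ∀ m : ℕ, (0:ℝ) < ε ^ m := fun m => pow_pos hε m
  -- bounds for ghat, a.e. under P
  have hghatbd : ∀ m : ℕ, m ≤ k → ∀ᵐ ω ∂P, ε ^ m ≤ ghat m ω ∧ ghat m ω ≤ 1 := by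
    intro m hm
    have hall : ∀ᵐ ω ∂P, ∀ s ∈ Finset.Icc 1 m, ε ≤ phat s ω ∧ phat s ω ≤ 1 := by
      rw [Filter.eventually_all_finset]
      intro s hs
      obtain ⟨h1, h2⟩ := Finset.mem_Icc.mp hs
      exact hphatbd s h1 (by omega)
    filter_upwards [hall] with ω hω
    rw [hghat]
    constructor
    · calc ε ^ m = ∏ _s ∈ Finset.Icc 1 m, ε := by
            rw [Finset.prod_const, Nat.card_Icc, Nat.add_sub_cancel]
      _ ≤ ∏ s ∈ Finset.Icc 1 m, phat s ω :=
            Finset.prod_le_prod (fun s _ => hε.le) (fun s hs => (hω s hs).1)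
    · exact Finset.prod_le_one (fun s hs => hε.le.trans (hω s hs).1) (fun s hs => (hω s hs).2)
  have hghatinvbd : ∀ m : ℕ, m ≤ k → ∀ᵐ ω ∂P, |(ghat m ω)⁻¹| ≤ (ε ^ m)⁻¹ := by
    intro m hm
    filter_upwards [hghatbd m hm] with ω hω
    rw [abs_of_nonneg (inv_nonneg.2 ((hεm m).le.trans hω.1))]
    exact inv_anti₀ (hεm m) hω.1
  -- lower bound for g, a.e. under P
  have hgbdlow : ∀ m : ℕ, m ≤ k → ∀ᵐ ω ∂P, ε ^ m ≤ g m ω := by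
    intro m hm
    have hall : ∀ᵐ ω ∂P, ∀ s ∈ Finset.Icc 1 m, ε ≤ p s ω := by
      rw [Filter.eventually_all_finset]
      intro s hs
      obtain ⟨h1, h2⟩ := Finset.mem_Icc.mp hs
      exact hppos s h1 (by omega)
    filter_upwards [hall] with ω hω
    rw [hg]
    calc ε ^ m = ∏ _s ∈ Finset.Icc 1 m, ε := by
          rw [Finset.prod_const, Nat.card_Icc, Nat.add_sub_cancel]
    _ ≤ ∏ s ∈ Finset.Icc 1 m, p s ω :=
          Finset.prod_le_prod (fun s _ => hε.le) (fun s hs => hω s hs)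
  -- p is at most 1, a.e. under P[|B (s-1)]
  have hple1 : ∀ s : ℕ, 1 ≤ s → s ≤ k → ∀ᵐ ω ∂(P[|B (s - 1)]), p s ω ≤ 1 := by
    intro s h1 hsk
    haveI : IsProbabilityMeasure (P[|B (s - 1)]) :=
      cond_isProbabilityMeasure (hBpos _ (by omega))
    have hintind : Integrable ((B s).indicator fun _ => (1:ℝ)) (P[|B (s - 1)]) :=
      (integrable_const (1:ℝ)).indicator (hBmeas s hsk)
    have hmono := condExp_mono (μ := P[|B (s - 1)]) (m := 𝒲 s) hintind
      (integrable_const (1:ℝ))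
      (Filter.Eventually.of_forall (fun ω => Set.indicator_le_self' (by simp) ω))
    have hc := condExp_const (μ := P[|B (s - 1)]) (h𝒲le s h1 hsk) (1:ℝ)
    filter_upwards [hpver s h1 hsk, hmono] with ω h1ω h2ω
    rw [h1ω]
    calc ((P[|B (s - 1)])[(B s).indicator fun _ => (1:ℝ)|𝒲 s]) ω
        ≤ ((P[|B (s - 1)])[(fun _ => (1:ℝ))|𝒲 s]) ω := h2ω
      _ = 1 := by rw [hc]
  -- bounds for g, a.e. under P[|B m]
  have hgcondbd : ∀ m : ℕ, m ≤ k →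
      ∀ᵐ ω ∂(P[|B m]), ε ^ m ≤ g m ω ∧ g m ω ≤ 1 := by
    intro m hm
    have hlow : ∀ᵐ ω ∂(P[|B m]), ε ^ m ≤ g m ω :=
      (hgbdlow m hm).filter_mono cond_absolutelyContinuous.ae_le
    have hall : ∀ᵐ ω ∂(P[|B m]), ∀ s ∈ Finset.Icc 1 m, p s ω ≤ 1 := by
      rw [Filter.eventually_all_finset]
      intro s hs
      obtain ⟨h1, h2⟩ := Finset.mem_Icc.mp hs
      have hac : P[|B m] ≪ P[|B (s - 1)] :=
        auxMR_cond_ac (hBchain (s - 1) m (by omega) hm) (hBfin _)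
          (hBmeas _ (by omega)) (hBmeas _ hm)
      exact (hple1 s h1 (by omega)).filter_mono hac.ae_le
    have hεall : ∀ᵐ ω ∂(P[|B m]), ∀ s ∈ Finset.Icc 1 m, ε ≤ p s ω := by
      rw [Filter.eventually_all_finset]
      intro s hs
      obtain ⟨h1, h2⟩ := Finset.mem_Icc.mp hs
      exact (hppos s h1 (by omega)).filter_mono cond_absolutelyContinuous.ae_le
    filter_upwards [hlow, hall, hεall] with ω h1ω h2ω h3ω
    refine ⟨h1ω, ?_⟩
    rw [hg]
    exact Finset.prod_le_one (fun s hs => hε.le.trans (h3ω s hs)) (fun s hs => h2ω s hs)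
  -- ## Integrability of Qhat under conditional measures and under P
  have hQhatsm : ∀ m : ℕ, 1 ≤ m → m ≤ k + 1 → AEStronglyMeasurable (Qhat m) P := by
    intro m h1 hm
    rcases Nat.lt_or_ge m (k + 1) with h | h
    · exact ((hQhatmeas m h1 (by omega)).mono (h𝒲le m h1 (by omega)) le_rfl).aestronglyMeasurable
    · obtain rfl : m = k + 1 := le_antisymm hm h
      rw [hQhattop]
      exact hYint.aestronglyMeasurable
  have hQhatintC : ∀ m t : ℕ, 1 ≤ m → m ≤ k + 1 → t ≤ k → Integrable (Qhat m) (P[|B t]) := by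
    intro m t h1 hm htk
    haveI : IsProbabilityMeasure (P[|B t]) := cond_isProbabilityMeasure (hBpos _ htk)
    rcases Nat.lt_or_ge m (k + 1) with h | h
    · obtain ⟨C, hC⟩ := hQhatbd m h1 (by omega)
      exact auxMR_integrable_of_bound _
        ((hQhatsm m h1 hm).mono_ac cond_absolutelyContinuous)
        (Filter.Eventually.of_forall hC)
    · obtain rfl : m = k + 1 := le_antisymm hm h
      rw [hQhattop]
      exact (auxMR_integrable_cond_iff P (hBpos t htk) (hBfin _) Y).2 hYint.integrableOn
  have hQhatintP : ∀ m : ℕ, 1 ≤ m → m ≤ k + 1 → Integrable (Qhat m) P := by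
    intro m h1 hm
    rcases Nat.lt_or_ge m (k + 1) with h | h
    · obtain ⟨C, hC⟩ := hQhatbd m h1 (by omega)
      exact auxMR_integrable_of_bound _ (hQhatsm m h1 hm) (Filter.Eventually.of_forall hC)
    · obtain rfl : m = k + 1 := le_antisymm hm h
      rw [hQhattop]; exact hYint
  -- ## Step A : the terms with m₀ < m ≤ k vanish
  have stepA : ∀ m : ℕ, m₀ < m → m ≤ k →
      ∫ ω, (B m).indicator
        (fun ω' => (ghat m ω')⁻¹ * (Qhat (m + 1) ω' - Qhat m ω')) ω ∂P = 0 := by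
    intro m hm₀m hmk
    have h1m : 1 ≤ m := by omega
    haveI : IsProbabilityMeasure (P[|B m]) := cond_isProbabilityMeasure (hBpos m hmk)
    have hacP : (P[|B m]) ≪ P := cond_absolutelyContinuous
    have hQm : Qhat m =ᵐ[P[|B m]] Q m := by
      have hac : (P[|B m]) ≪ P[|B (m - 1)] :=
        auxMR_cond_ac (hBchain (m - 1) m (by omega) hmk) (hBfin _)
          (hBmeas _ (by omega)) (hBmeas _ hmk)
      exact (hQcorrect m hm₀m hmk).filter_mono hac.ae_le
    have hQm1 : Qhat (m + 1) =ᵐ[P[|B m]] Q (m + 1) := by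
      rcases Nat.lt_or_ge m k with h | h
      · have h2 := hQcorrect (m + 1) (by omega) (by omega)
        simpa using h2
      · obtain rfl : m = k := le_antisymm hmk h
        rw [hQhattop, hQtop]
    have hG : Measurable[𝒲 m] fun ω => (ghat m ω)⁻¹ := (hghatmeas' m m le_rfl h1m hmk).inv
    have hGsm : AEStronglyMeasurable (fun ω => (ghat m ω)⁻¹) (P[|B m]) :=
      ((hghatmeasP m hmk).inv.aestronglyMeasurable).mono_ac hacP
    have hGbd : ∀ᵐ ω ∂(P[|B m]), ‖(ghat m ω)⁻¹‖ ≤ (ε ^ m)⁻¹ := by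
      have h := (hghatinvbd m hmk).filter_mono hacP.ae_le
      exact h.mono fun ω hω => by rwa [Real.norm_eq_abs]
    have hX : Integrable (Q (m + 1)) (P[|B m]) :=
      (hQhatintC (m + 1) m (by omega) (by omega) hmk).congr hQm1
    have hGX : Integrable (fun ω => (ghat m ω)⁻¹ * Q (m + 1) ω) (P[|B m]) :=
      hX.bdd_mul hGsm hGbd
    have hQmint : Integrable (Q m) (P[|B m]) :=
      (hQhatintC m m h1m (by omega) hmk).congr hQm
    have hGZ : Integrable (fun ω => (ghat m ω)⁻¹ * Q m ω) (P[|B m]) :=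
      hQmint.bdd_mul hGsm hGbd
    have hcongr : (fun ω => (ghat m ω)⁻¹ * (Qhat (m + 1) ω - Qhat m ω)) =ᵐ[P[|B m]]
        fun ω => (ghat m ω)⁻¹ * Q (m + 1) ω - (ghat m ω)⁻¹ * Q m ω := by
      filter_upwards [hQm, hQm1] with ω h1ω h2ω
      rw [h1ω, h2ω, mul_sub]
    have hpull := auxMR_pullout (P[|B m]) (h𝒲le m h1m hmk) hG hGX hX
    have hcongr2 : (fun ω => (ghat m ω)⁻¹ * ((P[|B m])[Q (m + 1)|𝒲 m]) ω) =ᵐ[P[|B m]]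
        fun ω => (ghat m ω)⁻¹ * Q m ω := by
      filter_upwards [hQver m h1m hmk] with ω hω
      rw [← hω]
    rw [integral_indicator (hBmeas m hmk),
      auxMR_setIntegral_cond P (hBpos m hmk) (hBfin _), integral_congr_ae hcongr,
      integral_sub hGX hGZ, hpull.1, integral_congr_ae hcongr2, sub_self, mul_zero]
  -- ## Step B : shift identity for the candidate quantities, m = n+1 ≤ m₀
  have stepB : ∀ n : ℕ, n + 1 ≤ m₀ →
      ∫ ω in B (n + 1), (ghat (n + 1) ω)⁻¹ * Qhat (n + 1) ω ∂P
        = ∫ ω in B n, (ghat n ω)⁻¹ * Qhat (n + 1) ω ∂P := by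
    intro n hn
    have hnk : n + 1 ≤ k := le_trans hn hm₀
    have h1 : (1:ℕ) ≤ n + 1 := by omega
    haveI : IsProbabilityMeasure (P[|B n]) := cond_isProbabilityMeasure (hBpos _ (by omega))
    have hacP : (P[|B n]) ≪ P := cond_absolutelyContinuous
    have hpc : phat (n + 1) =ᵐ[P[|B n]] p (n + 1) := by
      simpa using hpcorrect (n + 1) h1 hn
    have hsplit : ∀ ω, ghat (n + 1) ω = ghat n ω * phat (n + 1) ω := by
      intro ω
      rw [hghat, hghat, Finset.prod_Icc_succ_top (by omega)]
    obtain ⟨C, hC⟩ := hQhatbd (n + 1) h1 hnk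
    -- the weight function F and the indicator X
    have haeF : (B (n + 1)).indicator
          (fun ω' => (ghat (n + 1) ω')⁻¹ * Qhat (n + 1) ω') =ᵐ[P[|B n]]
        fun ω => ((ghat n ω)⁻¹ * (p (n + 1) ω)⁻¹ * Qhat (n + 1) ω) *
          (B (n + 1)).indicator (fun _ => (1:ℝ)) ω := by
      filter_upwards [hpc] with ω hω
      by_cases h : ω ∈ B (n + 1)
      · rw [Set.indicator_of_mem h, Set.indicator_of_mem h, hsplit, mul_inv, hω]
        ring
      · rw [Set.indicator_of_notMem h, Set.indicator_of_notMem h, mul_zero]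
    have hFmeas : Measurable[𝒲 (n + 1)]
        fun ω => (ghat n ω)⁻¹ * (p (n + 1) ω)⁻¹ * Qhat (n + 1) ω :=
      (((hghatmeas' n (n + 1) (by omega) h1 hnk).inv.mul
        (hpmeas (n + 1) h1 hnk).inv).mul (hQhatmeas (n + 1) h1 hnk))
    have hXint : Integrable ((B (n + 1)).indicator fun _ => (1:ℝ)) (P[|B n]) :=
      (integrable_const (1:ℝ)).indicator (hBmeas _ hnk)
    have hFXint : Integrable (fun ω => ((ghat n ω)⁻¹ * (p (n + 1) ω)⁻¹ * Qhat (n + 1) ω) *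
        (B (n + 1)).indicator (fun _ => (1:ℝ)) ω) (P[|B n]) := by
      refine auxMR_integrable_of_bound _ ?_ (C := (ε ^ n)⁻¹ * ε⁻¹ * C * 1) ?_
      · exact ((hFmeas.mono (h𝒲le (n + 1) h1 hnk) le_rfl).mul
          ((measurable_const.indicator (hBmeas _ hnk)))).aestronglyMeasurable.mono_ac hacP
      · have hεp : ∀ᵐ ω ∂(P[|B n]), ε ≤ p (n + 1) ω :=
          (hppos (n + 1) h1 hnk).filter_mono hacP.ae_le
        have hgb : ∀ᵐ ω ∂(P[|B n]), |(ghat n ω)⁻¹| ≤ (ε ^ n)⁻¹ :=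
          (hghatinvbd n (by omega)).filter_mono hacP.ae_le
        filter_upwards [hεp, hgb] with ω h1ω h2ω
        have hpb : |(p (n + 1) ω)⁻¹| ≤ ε⁻¹ := by
          rw [abs_of_nonneg (inv_nonneg.2 ((hε.le.trans h1ω)))]
          exact inv_anti₀ hε h1ω
        have hXb : |(B (n + 1)).indicator (fun _ => (1:ℝ)) ω| ≤ 1 := by
          by_cases h : ω ∈ B (n + 1) <;>
            simp [Set.indicator_of_mem, Set.indicator_of_notMem, h]
        exact auxMR_abs_mul_le (auxMR_abs_mul_le (auxMR_abs_mul_le h2ω hpb) (hC ω)) hXb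
    have hpull := auxMR_pullout (P[|B n]) (h𝒲le (n + 1) h1 hnk) hFmeas hFXint hXint
    have hpv : p (n + 1) =ᵐ[P[|B n]]
        (P[|B n])[(B (n + 1)).indicator (fun _ => (1:ℝ))|𝒲 (n + 1)] := by
      simpa using hpver (n + 1) h1 hnk
    have hae2 : (fun ω => ((ghat n ω)⁻¹ * (p (n + 1) ω)⁻¹ * Qhat (n + 1) ω) *
          ((P[|B n])[(B (n + 1)).indicator (fun _ => (1:ℝ))|𝒲 (n + 1)]) ω) =ᵐ[P[|B n]]
        fun ω => (ghat n ω)⁻¹ * Qhat (n + 1) ω := by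
      have hεp : ∀ᵐ ω ∂(P[|B n]), ε ≤ p (n + 1) ω :=
        (hppos (n + 1) h1 hnk).filter_mono hacP.ae_le
      filter_upwards [hpv, hεp] with ω h1ω h2ω
      rw [← h1ω]
      have hp0 : p (n + 1) ω ≠ 0 := ne_of_gt (lt_of_lt_of_le hε h2ω)
      calc (ghat n ω)⁻¹ * (p (n + 1) ω)⁻¹ * Qhat (n + 1) ω * p (n + 1) ω
          = (ghat n ω)⁻¹ * Qhat (n + 1) ω * ((p (n + 1) ω)⁻¹ * p (n + 1) ω) := by ring
        _ = (ghat n ω)⁻¹ * Qhat (n + 1) ω := by rw [inv_mul_cancel₀ hp0, mul_one]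
    calc ∫ ω in B (n + 1), (ghat (n + 1) ω)⁻¹ * Qhat (n + 1) ω ∂P
        = ∫ ω in B n, (B (n + 1)).indicator
            (fun ω' => (ghat (n + 1) ω')⁻¹ * Qhat (n + 1) ω') ω ∂P := by
          rw [setIntegral_indicator (hBmeas (n + 1) hnk),
            Set.inter_eq_self_of_subset_right (hBmono n (by omega))]
      _ = (P (B n)).toReal * ∫ ω, (B (n + 1)).indicator
            (fun ω' => (ghat (n + 1) ω')⁻¹ * Qhat (n + 1) ω') ω ∂(P[|B n]) :=
          auxMR_setIntegral_cond P (hBpos n (by omega)) (hBfin _) _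
      _ = (P (B n)).toReal * ∫ ω, ((ghat n ω)⁻¹ * (p (n + 1) ω)⁻¹ * Qhat (n + 1) ω) *
            (B (n + 1)).indicator (fun _ => (1:ℝ)) ω ∂(P[|B n]) := by
          rw [integral_congr_ae haeF]
      _ = (P (B n)).toReal * ∫ ω, ((ghat n ω)⁻¹ * (p (n + 1) ω)⁻¹ * Qhat (n + 1) ω) *
            ((P[|B n])[(B (n + 1)).indicator (fun _ => (1:ℝ))|𝒲 (n + 1)]) ω ∂(P[|B n]) := by
          rw [hpull.1]
      _ = (P (B n)).toReal * ∫ ω, (ghat n ω)⁻¹ * Qhat (n + 1) ω ∂(P[|B n]) := by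
          rw [integral_congr_ae hae2]
      _ = ∫ ω in B n, (ghat n ω)⁻¹ * Qhat (n + 1) ω ∂P :=
          (auxMR_setIntegral_cond P (hBpos n (by omega)) (hBfin _) _).symm
  -- ## Step C : at time m₀ switch from candidate to true nuisances
  haveI : IsProbabilityMeasure (P[|B m₀]) := cond_isProbabilityMeasure (hBpos _ hm₀)
  have hgg : ∀ᵐ ω ∂(P[|B m₀]), ghat m₀ ω = g m₀ ω := by
    have hall : ∀ᵐ ω ∂(P[|B m₀]), ∀ s ∈ Finset.Icc 1 m₀, phat s ω = p s ω := by
      rw [Filter.eventually_all_finset]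
      intro s hs
      obtain ⟨hs1, hs2⟩ := Finset.mem_Icc.mp hs
      have hac : (P[|B m₀]) ≪ P[|B (s - 1)] :=
        auxMR_cond_ac (hBchain (s - 1) m₀ (by omega) hm₀) (hBfin _)
          (hBmeas _ (by omega)) (hBmeas _ hm₀)
      exact (hpcorrect s hs1 hs2).filter_mono hac.ae_le
    filter_upwards [hall] with ω hω
    rw [hghat, hg]
    exact Finset.prod_congr rfl hω
  have hQQ : Qhat (m₀ + 1) =ᵐ[P[|B m₀]] Q (m₀ + 1) := by
    rcases Nat.lt_or_ge m₀ k with h | h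
    · simpa using hQcorrect (m₀ + 1) (by omega) (by omega)
    · obtain rfl : m₀ = k := le_antisymm hm₀ h
      rw [hQhattop, hQtop]
  have haeC : (fun ω => (ghat m₀ ω)⁻¹ * Qhat (m₀ + 1) ω) =ᵐ[P[|B m₀]]
      fun ω => (g m₀ ω)⁻¹ * Q (m₀ + 1) ω := by
    filter_upwards [hgg, hQQ] with ω h1ω h2ω
    rw [h1ω, h2ω]
  have stepC : ∫ ω in B m₀, (ghat m₀ ω)⁻¹ * Qhat (m₀ + 1) ω ∂P
      = ∫ ω in B m₀, (g m₀ ω)⁻¹ * Q (m₀ + 1) ω ∂P := by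
    rw [auxMR_setIntegral_cond P (hBpos m₀ hm₀) (hBfin _),
      auxMR_setIntegral_cond P (hBpos m₀ hm₀) (hBfin _), integral_congr_ae haeC]
  -- initial integrability for the downward chain
  have hinit : Integrable (fun ω => (g m₀ ω)⁻¹ * Q (m₀ + 1) ω) (P[|B m₀]) := by
    have hghatint : Integrable (fun ω => (ghat m₀ ω)⁻¹ * Qhat (m₀ + 1) ω) (P[|B m₀]) := by
      refine (hQhatintC (m₀ + 1) m₀ (by omega) (by omega) hm₀).bdd_mul
        (((hghatmeasP m₀ hm₀).inv.aestronglyMeasurable).mono_ac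
          cond_absolutelyContinuous) (c := (ε ^ m₀)⁻¹) ?_
      have h := (hghatinvbd m₀ hm₀).filter_mono
        (cond_absolutelyContinuous (μ := P) (s := B m₀)).ae_le
      exact h.mono fun ω hω => by rwa [Real.norm_eq_abs]
    exact hghatint.congr haeC
  -- ## Step D : the downward chain through the true nuisances
  have stepD : ∀ n : ℕ, n ≤ m₀ →
      Integrable (fun ω => (g n ω)⁻¹ * Q (n + 1) ω) (P[|B n]) →
      ∫ ω in B n, (g n ω)⁻¹ * Q (n + 1) ω ∂P = ∫ ω, Q 1 ω ∂P := by
    intro n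
    induction n with
    | zero =>
      intro _ _
      have hg0 : ∀ ω, (g 0 ω)⁻¹ = 1 := by
        intro ω; rw [hg]; simp
      have hcompl : P (B 0)ᶜ = 0 := by
        rw [measure_compl (hBmeas 0 (by omega)) (hBfin _), hB0, measure_univ, tsub_self]
      have hres : P.restrict (B 0) = P :=
        Measure.restrict_eq_self_of_ae_mem (mem_ae_iff.2 (by simpa using hcompl))
      simp only [hg0, one_mul]
      rw [hres]
    | succ n ihn =>
      intro hsucc hint
      have hnk : n + 1 ≤ k := le_trans hsucc hm₀
      have h1 : (1:ℕ) ≤ n + 1 := by omega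
      haveI : IsProbabilityMeasure (P[|B (n + 1)]) :=
        cond_isProbabilityMeasure (hBpos _ hnk)
      haveI : IsProbabilityMeasure (P[|B n]) :=
        cond_isProbabilityMeasure (hBpos _ (by omega))
      -- D1 : tower property at time n+1
      have hGmeas : Measurable[𝒲 (n + 1)] fun ω => (g (n + 1) ω)⁻¹ :=
        (hgmeas (n + 1) (n + 1) le_rfl h1 hnk).inv
      have hgbds := hgcondbd (n + 1) hnk
      have hXint : Integrable (Q (n + 1 + 1)) (P[|B (n + 1)]) := by
        refine hint.abs.mono' ?_ ?_
        · rcases Nat.lt_or_ge (n + 1) k with h | h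
          · exact ((hQmeas (n + 1 + 1) (by omega) (by omega)).mono
              (h𝒲le (n + 1 + 1) (by omega) (by omega)) le_rfl).aestronglyMeasurable.mono_ac
              cond_absolutelyContinuous
          · have hEq : n + 1 + 1 = k + 1 := by omega
            rw [hEq, hQtop]
            exact hYint.aestronglyMeasurable.mono_ac cond_absolutelyContinuous
        · filter_upwards [hgbds] with ω hω
          obtain ⟨hl, hu⟩ := hω
          have hgpos : 0 < g (n + 1) ω := lt_of_lt_of_le (hεm _) hl
          have h1g : 1 ≤ (g (n + 1) ω)⁻¹ := by
            rw [le_inv_comm₀ one_pos hgpos]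
            simpa using hu
          rw [Real.norm_eq_abs, abs_mul, abs_of_nonneg (inv_nonneg.2 hgpos.le)]
          exact le_mul_of_one_le_left (abs_nonneg _) h1g
      have hpull1 := auxMR_pullout (P[|B (n + 1)]) (h𝒲le (n + 1) h1 hnk) hGmeas hint hXint
      have hQv : Q (n + 1) =ᵐ[P[|B (n + 1)]]
          (P[|B (n + 1)])[Q (n + 1 + 1)|𝒲 (n + 1)] := hQver (n + 1) h1 hnk
      have haeD1 : (fun ω => (g (n + 1) ω)⁻¹ *
            ((P[|B (n + 1)])[Q (n + 1 + 1)|𝒲 (n + 1)]) ω) =ᵐ[P[|B (n + 1)]]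
          fun ω => (g (n + 1) ω)⁻¹ * Q (n + 1) ω := by
        filter_upwards [hQv] with ω hω
        rw [← hω]
      have hD1int : Integrable (fun ω => (g (n + 1) ω)⁻¹ * Q (n + 1) ω) (P[|B (n + 1)]) :=
        hpull1.2.congr haeD1
      have hD1 : ∫ ω, (g (n + 1) ω)⁻¹ * Q (n + 1 + 1) ω ∂(P[|B (n + 1)])
          = ∫ ω, (g (n + 1) ω)⁻¹ * Q (n + 1) ω ∂(P[|B (n + 1)]) := by
        rw [hpull1.1, integral_congr_ae haeD1]
      -- D2 : shift from B (n+1) to B n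
      have hsplit : ∀ ω, g (n + 1) ω = g n ω * p (n + 1) ω := by
        intro ω
        rw [hg, hg, Finset.prod_Icc_succ_top (by omega)]
      have heqFX : ∀ ω, ((g n ω)⁻¹ * (p (n + 1) ω)⁻¹ * Q (n + 1) ω) *
            (B (n + 1)).indicator (fun _ => (1:ℝ)) ω
          = (B (n + 1)).indicator (fun ω' => (g (n + 1) ω')⁻¹ * Q (n + 1) ω') ω := by
        intro ω
        by_cases h : ω ∈ B (n + 1)
        · rw [Set.indicator_of_mem h, Set.indicator_of_mem h, hsplit, mul_inv]
          ring
        · rw [Set.indicator_of_notMem h, Set.indicator_of_notMem h, mul_zero]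
      have hFmeas : Measurable[𝒲 (n + 1)]
          fun ω => (g n ω)⁻¹ * (p (n + 1) ω)⁻¹ * Q (n + 1) ω :=
        ((hgmeas n (n + 1) (by omega) h1 hnk).inv.mul
          (hpmeas (n + 1) h1 hnk).inv).mul (hQmeas (n + 1) h1 hnk)
      have hXint' : Integrable ((B (n + 1)).indicator fun _ => (1:ℝ)) (P[|B n]) :=
        (integrable_const (1:ℝ)).indicator (hBmeas _ hnk)
      have hFXint : Integrable (fun ω => ((g n ω)⁻¹ * (p (n + 1) ω)⁻¹ * Q (n + 1) ω) *
          (B (n + 1)).indicator (fun _ => (1:ℝ)) ω) (P[|B n]) := by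
        have hindint : Integrable ((B (n + 1)).indicator
            (fun ω' => (g (n + 1) ω')⁻¹ * Q (n + 1) ω')) (P[|B n]) := by
          refine (auxMR_integrable_cond_iff P (hBpos n (by omega)) (hBfin _) _).2 ?_
          refine Integrable.integrableOn ?_
          rw [integrable_indicator_iff (hBmeas (n + 1) hnk)]
          exact (auxMR_integrable_cond_iff P (hBpos (n + 1) hnk) (hBfin _) _).1 hD1int
        exact hindint.congr (Filter.Eventually.of_forall fun ω => (heqFX ω).symm)
      have hpull2 := auxMR_pullout (P[|B n]) (h𝒲le (n + 1) h1 hnk) hFmeas hFXint hXint'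
      have hpv : p (n + 1) =ᵐ[P[|B n]]
          (P[|B n])[(B (n + 1)).indicator (fun _ => (1:ℝ))|𝒲 (n + 1)] := by
        simpa using hpver (n + 1) h1 hnk
      have hεp : ∀ᵐ ω ∂(P[|B n]), ε ≤ p (n + 1) ω :=
        (hppos (n + 1) h1 hnk).filter_mono
          (cond_absolutelyContinuous (μ := P) (s := B n)).ae_le
      have haeD2 : (fun ω => ((g n ω)⁻¹ * (p (n + 1) ω)⁻¹ * Q (n + 1) ω) *
            ((P[|B n])[(B (n + 1)).indicator (fun _ => (1:ℝ))|𝒲 (n + 1)]) ω) =ᵐ[P[|B n]]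
          fun ω => (g n ω)⁻¹ * Q (n + 1) ω := by
        filter_upwards [hpv, hεp] with ω h1ω h2ω
        rw [← h1ω]
        have hp0 : p (n + 1) ω ≠ 0 := ne_of_gt (lt_of_lt_of_le hε h2ω)
        calc (g n ω)⁻¹ * (p (n + 1) ω)⁻¹ * Q (n + 1) ω * p (n + 1) ω
            = (g n ω)⁻¹ * Q (n + 1) ω * ((p (n + 1) ω)⁻¹ * p (n + 1) ω) := by ring
          _ = (g n ω)⁻¹ * Q (n + 1) ω := by rw [inv_mul_cancel₀ hp0, mul_one]
      have hD2int : Integrable (fun ω => (g n ω)⁻¹ * Q (n + 1) ω) (P[|B n]) :=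
        hpull2.2.congr haeD2
      calc ∫ ω in B (n + 1), (g (n + 1) ω)⁻¹ * Q (n + 1 + 1) ω ∂P
          = (P (B (n + 1))).toReal *
              ∫ ω, (g (n + 1) ω)⁻¹ * Q (n + 1 + 1) ω ∂(P[|B (n + 1)]) :=
            auxMR_setIntegral_cond P (hBpos _ hnk) (hBfin _) _
        _ = (P (B (n + 1))).toReal *
              ∫ ω, (g (n + 1) ω)⁻¹ * Q (n + 1) ω ∂(P[|B (n + 1)]) := by rw [hD1]
        _ = ∫ ω in B (n + 1), (g (n + 1) ω)⁻¹ * Q (n + 1) ω ∂P :=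
            (auxMR_setIntegral_cond P (hBpos _ hnk) (hBfin _) _).symm
        _ = ∫ ω in B n, (B (n + 1)).indicator
              (fun ω' => (g (n + 1) ω')⁻¹ * Q (n + 1) ω') ω ∂P := by
            rw [setIntegral_indicator (hBmeas (n + 1) hnk),
              Set.inter_eq_self_of_subset_right (hBmono n (by omega))]
        _ = (P (B n)).toReal * ∫ ω, (B (n + 1)).indicator
              (fun ω' => (g (n + 1) ω')⁻¹ * Q (n + 1) ω') ω ∂(P[|B n]) :=
            auxMR_setIntegral_cond P (hBpos n (by omega)) (hBfin _) _
        _ = (P (B n)).toReal * ∫ ω, ((g n ω)⁻¹ * (p (n + 1) ω)⁻¹ * Q (n + 1) ω) *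
              (B (n + 1)).indicator (fun _ => (1:ℝ)) ω ∂(P[|B n]) := by
            rw [integral_congr_ae (Filter.Eventually.of_forall fun ω => (heqFX ω).symm)]
        _ = (P (B n)).toReal * ∫ ω, ((g n ω)⁻¹ * (p (n + 1) ω)⁻¹ * Q (n + 1) ω) *
              ((P[|B n])[(B (n + 1)).indicator (fun _ => (1:ℝ))|𝒲 (n + 1)]) ω ∂(P[|B n]) := by
            rw [hpull2.1]
        _ = (P (B n)).toReal * ∫ ω, (g n ω)⁻¹ * Q (n + 1) ω ∂(P[|B n]) := by
            rw [integral_congr_ae haeD2]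
        _ = ∫ ω in B n, (g n ω)⁻¹ * Q (n + 1) ω ∂P :=
            (auxMR_setIntegral_cond P (hBpos n (by omega)) (hBfin _) _).symm
        _ = ∫ ω, Q 1 ω ∂P := ihn (by omega) hD2int
  -- ## Assembly
  -- integrability of each summand under P
  have hsummandint : ∀ m : ℕ, 1 ≤ m → m ≤ k →
      Integrable (fun ω => (ghat m ω)⁻¹ * (Qhat (m + 1) ω - Qhat m ω)) P := by
    intro m h1 hmk
    refine ((hQhatintP (m + 1) (by omega) (by omega)).sub
      (hQhatintP m h1 (by omega))).bdd_mul
      ((hghatmeasP m hmk).inv.aestronglyMeasurable) (c := (ε ^ m)⁻¹) ?_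
    exact (hghatinvbd m hmk).mono fun ω hω => by rwa [Real.norm_eq_abs]
  have hindint : ∀ m ∈ Finset.Icc 1 k,
      Integrable ((B m).indicator
        (fun ω' => (ghat m ω')⁻¹ * (Qhat (m + 1) ω' - Qhat m ω'))) P := by
    intro m hm
    obtain ⟨h1, h2⟩ := Finset.mem_Icc.mp hm
    rw [integrable_indicator_iff (hBmeas m h2)]
    exact (hsummandint m h1 h2).integrableOn
  have hQhat1int : Integrable (Qhat 1) P := hQhatintP 1 le_rfl (by omega)
  -- split the integral of the sum
  rw [integral_add (integrable_finset_sum _ hindint) hQhat1int,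
    integral_finset_sum _ hindint]
  -- split the index range at m₀
  have hIcc : Finset.Icc 1 k = Finset.Ioc 0 k := by
    ext x
    simp only [Finset.mem_Icc, Finset.mem_Ioc]
    omega
  rw [hIcc, ← Finset.sum_Ioc_consecutive _ (Nat.zero_le m₀) hm₀]
  -- the upper part vanishes
  have hupper : ∑ m ∈ Finset.Ioc m₀ k, ∫ ω, (B m).indicator
      (fun ω' => (ghat m ω')⁻¹ * (Qhat (m + 1) ω' - Qhat m ω')) ω ∂P = 0 := by
    refine Finset.sum_eq_zero fun m hm => ?_
    obtain ⟨hm1, hm2⟩ := Finset.mem_Ioc.mp hm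
    exact stepA m hm1 hm2
  -- the value of the integral over B 0
  have hg0 : ∀ ω, (ghat 0 ω)⁻¹ = 1 := by
    intro ω; rw [hghat]; simp
  have hcompl : P (B 0)ᶜ = 0 := by
    rw [measure_compl (hBmeas 0 (by omega)) (hBfin _), hB0, measure_univ, tsub_self]
  have hres : P.restrict (B 0) = P :=
    Measure.restrict_eq_self_of_ae_mem (mem_ae_iff.2 (by simpa using hcompl))
  -- the lower part telescopes
  have htel : ∀ t : ℕ, t ≤ m₀ →
      ∑ m ∈ Finset.Ioc 0 t, ∫ ω, (B m).indicator
          (fun ω' => (ghat m ω')⁻¹ * (Qhat (m + 1) ω' - Qhat m ω')) ω ∂P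
        = ∫ ω in B t, (ghat t ω)⁻¹ * Qhat (t + 1) ω ∂P - ∫ ω, Qhat 1 ω ∂P := by
    intro t
    induction t with
    | zero =>
      intro _
      rw [Finset.Ioc_self, Finset.sum_empty]
      simp only [hg0, one_mul]
      rw [hres, sub_self]
    | succ t iht =>
      intro ht
      rw [Finset.sum_Ioc_succ_top (Nat.zero_le t), iht (by omega)]
      have hint1 : IntegrableOn (fun ω => (ghat (t + 1) ω)⁻¹ * Qhat (t + 1 + 1) ω)
          (B (t + 1)) P := by
        refine Integrable.integrableOn ?_
        refine (hQhatintP (t + 1 + 1) (by omega) (by omega)).bdd_mul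
          ((hghatmeasP (t + 1) (by omega)).inv.aestronglyMeasurable) (c := (ε ^ (t + 1))⁻¹) ?_
        exact (hghatinvbd (t + 1) (by omega)).mono fun ω hω => by rwa [Real.norm_eq_abs]
      have hint2 : IntegrableOn (fun ω => (ghat (t + 1) ω)⁻¹ * Qhat (t + 1) ω)
          (B (t + 1)) P := by
        refine Integrable.integrableOn ?_
        refine (hQhatintP (t + 1) (by omega) (by omega)).bdd_mul
          ((hghatmeasP (t + 1) (by omega)).inv.aestronglyMeasurable) (c := (ε ^ (t + 1))⁻¹) ?_
        exact (hghatinvbd (t + 1) (by omega)).mono fun ω hω => by rwa [Real.norm_eq_abs]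
      have hterm : ∫ ω, (B (t + 1)).indicator
            (fun ω' => (ghat (t + 1) ω')⁻¹ * (Qhat (t + 1 + 1) ω' - Qhat (t + 1) ω')) ω ∂P
          = ∫ ω in B (t + 1), (ghat (t + 1) ω)⁻¹ * Qhat (t + 1 + 1) ω ∂P
            - ∫ ω in B (t + 1), (ghat (t + 1) ω)⁻¹ * Qhat (t + 1) ω ∂P := by
        rw [integral_indicator (hBmeas _ (by omega)), ← integral_sub hint1 hint2]
        exact integral_congr_ae (Filter.Eventually.of_forall fun ω => by ring)
      rw [hterm, stepB t (by omega)]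
      ring
  rw [htel m₀ le_rfl, hupper, stepC,
    stepD m₀ le_rfl hinit]
  ring
end

section
/- Multiple robustness of the one-step functional for ψ_t: fix an integer t ≥ 1 and adopt the core setup with horizon t, with integrable observed outcomes Y₀,…,Y_t. For each k ∈ {1,…,t} and each j ∈ {k−1, k}, let Q^{j,k,m} and φ_{j,k} be the true iterated regressions and functionals, and let candidate nuisances be given: 𝒲_m-measurable p̂_m with ε ≤ p̂_m ≤ 1 a.s. (ĝ₀ ≡ 1, ĝ_m = ∏_{s=1}^m p̂_s) and, for each (j,k), bounded 𝒲_m-measurable Q̂^{j,k,m} for m = 1,…,k with Q̂^{j,k,k+1} := Y_j. Define ψ̃ := Y₀ + Σ_{k=1}^t ( φ̃_{k,k} − φ̃_{k−1,k} ) with φ̃_{j,k} := Σ_{m=1}^k 1_{B_m} ĝ_m^{−1}(Q̂^{j,k,m+1} − Q̂^{j,k,m}) + Q̂^{j,k,1}. Suppose for every k ∈ {1,…,t} there exists m₀(k) ∈ {0,…,k} such that p̂_m = p_m a.s. under P(·|B_{m−1}) for all m ≤ m₀(k), and Q̂^{j,k,m} = Q^{j,k,m} a.s. under P(·|B_{m−1})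 for all m₀(k) < m ≤ k and j ∈ {k−1, k}. Then E_P[ψ̃] = ψ_t := E_P[Y₀] + Σ_{k=1}^t (φ_{k,k} − φ_{k−1,k}). -/
open MeasureTheory ProbabilityTheory

namespace MRPsi

variable {Ω : Type*} [inst : MeasurableSpace Ω]

lemma integral_cond (P : Measure Ω) (B : Set Ω) (hB : MeasurableSet B) (f : Ω → ℝ) :
    ∫ ω, f ω ∂(P[|B]) = ((P B).toReal)⁻¹ * ∫ ω, B.indicator f ω ∂P := by
  rw [ProbabilityTheory.cond, integral_smul_measure, integral_indicator hB, smul_eq_mul,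
    ENNReal.toReal_inv]

lemma integral_indicator_eq_cond (P : Measure Ω) (B : Set Ω) (hB : MeasurableSet B)
    (h0 : P B ≠ 0) (hT : P B ≠ ⊤) (f : Ω → ℝ) :
    ∫ ω, B.indicator f ω ∂P = (P B).toReal * ∫ ω, f ω ∂(P[|B]) := by
  rw [integral_cond P B hB f, ← mul_assoc, mul_inv_cancel₀, one_mul]
  exact ENNReal.toReal_ne_zero.mpr ⟨h0, hT⟩

lemma ae_cond_iff (P : Measure Ω) (B : Set Ω) (hB : MeasurableSet B)
    (hT : P B ≠ ⊤) {φ : Ω → Prop} :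
    (∀ᵐ ω ∂(P[|B]), φ ω) ↔ ∀ᵐ ω ∂P, ω ∈ B → φ ω := by
  rw [ProbabilityTheory.cond, Measure.ae_ennreal_smul_measure_iff (by simpa using hT),
    ae_restrict_iff' hB]

lemma integrable_cond_iff (P : Measure Ω) (B : Set Ω) (hB : MeasurableSet B)
    (h0 : P B ≠ 0) (hT : P B ≠ ⊤) (f : Ω → ℝ) :
    Integrable f (P[|B]) ↔ Integrable (B.indicator f) P := by
  rw [ProbabilityTheory.cond, integrable_smul_measure (by simpa using hT) (by simpa using h0)]
  exact (integrable_indicator_iff hB).symm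

lemma integrable_cond_of_integrable (P : Measure Ω) (B : Set Ω) (h0 : P B ≠ 0) {f : Ω → ℝ}
    (hf : Integrable f P) : Integrable f (P[|B]) := by
  rw [ProbabilityTheory.cond]
  exact (hf.restrict).smul_measure (by simpa using h0)

/-- bounded (a.e.) measurable times integrable is integrable -/
lemma integrable_bdd_mul {P : Measure Ω} {f g : Ω → ℝ} (hg : Integrable g P)
    (hf : AEStronglyMeasurable f P) (C : ℝ) (hC : ∀ᵐ ω ∂P, |f ω| ≤ C) :
    Integrable (fun ω => f ω * g ω) P := by
  refine Integrable.mono' (hg.abs.const_mul C) (hf.mul hg.1) ?_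
  filter_upwards [hC] with ω hω
  calc ‖f ω * g ω‖ = |f ω| * |g ω| := abs_mul _ _
    _ ≤ C * |g ω| := mul_le_mul_of_nonneg_right hω (abs_nonneg _)

/-- pull-out property in integral form, plus integrability of the pulled-out product -/
lemma integral_mul_condexp (μ : @Measure Ω inst) {𝒲 : MeasurableSpace Ω} (h𝒲 : 𝒲 ≤ inst)
    [IsFiniteMeasure μ] {f g : Ω → ℝ} (hf : Measurable[𝒲] f) (hg : Integrable g μ)
    (hfg : Integrable (fun ω => f ω * g ω) μ) :
    (∫ ω, f ω * g ω ∂μ = ∫ ω, f ω * (μ[g|𝒲]) ω ∂μ)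
      ∧ Integrable (fun ω => f ω * (μ[g|𝒲]) ω) μ := by
  have hmul : μ[f * g|𝒲] =ᵐ[μ] f * μ[g|𝒲] :=
    condExp_mul_of_stronglyMeasurable_left hf.stronglyMeasurable hfg hg
  have hint : Integrable (fun ω => f ω * (μ[g|𝒲]) ω) μ := integrable_condExp.congr hmul
  refine ⟨?_, hint⟩
  have h1 : ∫ ω, f ω * g ω ∂μ = ∫ ω, (μ[f * g|𝒲]) ω ∂μ :=
    (integral_condExp (m₀ := inst) (μ := μ) (f := f * g) h𝒲).symm
  rw [h1]
  exact integral_congr_ae hmul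

lemma sum_tele (a f : ℕ → ℝ) :
    ∀ n, (∀ m, 1 ≤ m → m ≤ n → f m = a m - a (m - 1)) →
      ∑ m ∈ Finset.Icc 1 n, f m = a n - a 0 := by
  intro n
  induction n with
  | zero => simp
  | succ n ih =>
    intro h
    rw [Finset.sum_Icc_succ_top (by omega), ih (fun m h1 h2 => h m h1 (by omega)),
      h (n + 1) (by omega) le_rfl]
    simp

lemma keyA (P : Measure Ω) [IsProbabilityMeasure P]
    (t : ℕ)
    (B : ℕ → Set Ω)
    (hBmeas : ∀ m, m ≤ t → MeasurableSet (B m))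
    (hBmono : ∀ m, m < t → B (m + 1) ⊆ B m)
    (hB0 : P (B 0) = 1)
    (hBt : 0 < P (B t))
    (𝒲 : ℕ → MeasurableSpace Ω)
    (h𝒲le : ∀ m, 1 ≤ m → m ≤ t → 𝒲 m ≤ inst)
    (h𝒲mono : ∀ m, 1 ≤ m → m < t → 𝒲 m ≤ 𝒲 (m + 1))
    (ε : ℝ) (hε : 0 < ε)
    (p : ℕ → Ω → ℝ)
    (hpmeas : ∀ m, 1 ≤ m → m ≤ t → Measurable[𝒲 m] (p m))
    (hpver : ∀ m, 1 ≤ m → m ≤ t →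
      p m =ᵐ[P[|B (m - 1)]] (P[|B (m - 1)])[(B m).indicator (fun _ => (1 : ℝ))|𝒲 m])
    (hppos : ∀ m, 1 ≤ m → m ≤ t → ∀ᵐ ω ∂P, ε ≤ p m ω)
    (g : ℕ → Ω → ℝ)
    (hg : ∀ m ω, g m ω = ∏ s ∈ Finset.Icc 1 m, p s ω)
    (phat : ℕ → Ω → ℝ)
    (hphatmeas : ∀ m, 1 ≤ m → m ≤ t → Measurable[𝒲 m] (phat m))
    (hphatbd : ∀ m, 1 ≤ m → m ≤ t → ∀ᵐ ω ∂P, ε ≤ phat m ω ∧ phat m ω ≤ 1)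
    (ghat : ℕ → Ω → ℝ)
    (hghat : ∀ m ω, ghat m ω = ∏ s ∈ Finset.Icc 1 m, phat s ω)
    (k : ℕ) (hk1 : 1 ≤ k) (hkt : k ≤ t)
    (R Rhat : ℕ → Ω → ℝ)
    (hRtopint : Integrable (R (k + 1)) P)
    (hRhattop : Rhat (k + 1) = R (k + 1))
    (hRmeas : ∀ m, 1 ≤ m → m ≤ k → Measurable[𝒲 m] (R m))
    (hRver : ∀ m, 1 ≤ m → m ≤ k → R m =ᵐ[P[|B m]] (P[|B m])[R (m + 1)|𝒲 m])
    (hRhatmeas : ∀ m, 1 ≤ m → m ≤ k → Measurable[𝒲 m] (Rhat m))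
    (hRhatbd : ∀ m, 1 ≤ m → m ≤ k → ∃ C, ∀ ω, |Rhat m ω| ≤ C)
    (m0 : ℕ) (hm0k : m0 ≤ k)
    (hpc : ∀ m, 1 ≤ m → m ≤ m0 → phat m =ᵐ[P[|B (m - 1)]] p m)
    (hRc : ∀ m, m0 < m → m ≤ k → Rhat m =ᵐ[P[|B (m - 1)]] R m) :
    Integrable (fun ω => (∑ m ∈ Finset.Icc 1 k,
        (B m).indicator (fun ω' => (ghat m ω')⁻¹ * (Rhat (m + 1) ω' - Rhat m ω')) ω)
        + Rhat 1 ω) P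
    ∧ ∫ ω, ((∑ m ∈ Finset.Icc 1 k,
        (B m).indicator (fun ω' => (ghat m ω')⁻¹ * (Rhat (m + 1) ω' - Rhat m ω')) ω)
        + Rhat 1 ω) ∂P = ∫ ω, R 1 ω ∂P := by
  -- ===== basic facts =====
  have hBsub : ∀ a b, a ≤ b → b ≤ t → B b ⊆ B a := by
    intro a b
    induction b with
    | zero => intro hab _; have : a = 0 := by omega
              subst this; exact subset_rfl
    | succ n ih =>
      intro hab hbt
      rcases Nat.eq_or_lt_of_le hab with h | h
      · subst h; exact subset_rfl
      · exact (hBmono n (by omega)).trans (ih (by omega) (by omega))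
  have hPBne : ∀ n, n ≤ t → P (B n) ≠ 0 := by
    intro n hn
    have h1 : P (B t) ≤ P (B n) := measure_mono (hBsub n t hn le_rfl)
    intro h0
    rw [h0] at h1
    exact absurd (le_antisymm h1 zero_le) (by simpa using hBt.ne')
  have hPBtop : ∀ n, P (B n) ≠ ⊤ := fun n => measure_ne_top P _
  have hW : ∀ s m, 1 ≤ s → s ≤ m → m ≤ t → 𝒲 s ≤ 𝒲 m := by
    intro s m hs
    induction m with
    | zero => intro h _; omega
    | succ n ih =>
      intro hsm hmt
      rcases Nat.eq_or_lt_of_le hsm with h | h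
      · subst h; exact le_rfl
      · exact (ih (by omega) (by omega)).trans (h𝒲mono n (by omega) (by omega))
  -- ae transfer between P[|B n] and P
  have haeP : ∀ n, n ≤ t → ∀ {φ : Ω → Prop},
      (∀ᵐ ω ∂(P[|B n]), φ ω) ↔ ∀ᵐ ω ∂P, ω ∈ B n → φ ω :=
    fun n hn φ => MRPsi.ae_cond_iff P (B n) (hBmeas n hn) (hPBtop n)
  have haeOf : ∀ n, n ≤ t → ∀ {φ : Ω → Prop},
      (∀ᵐ ω ∂P, φ ω) → ∀ᵐ ω ∂(P[|B n]), φ ω := by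
    intro n hn φ h
    exact (haeP n hn).2 (h.mono fun ω hω _ => hω)
  have haemono : ∀ n n', n ≤ n' → n' ≤ t → ∀ {φ : Ω → Prop},
      (∀ᵐ ω ∂(P[|B n]), φ ω) → ∀ᵐ ω ∂(P[|B n']), φ ω := by
    intro n n' hnn' hn't φ h
    rw [haeP n' hn't]
    filter_upwards [(haeP n (hnn'.trans hn't)).1 h] with ω hω hmem
    exact hω (hBsub n n' hnn' hn't hmem)
  have haemem : ∀ n, n ≤ t → ∀ᵐ ω ∂(P[|B n]), ω ∈ B n := by
    intro n hn
    exact (haeP n hn).2 (Filter.Eventually.of_forall fun ω h => h)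
  have haeB0 : ∀ᵐ ω ∂P, ω ∈ B 0 := by
    have : P (B 0)ᶜ = 0 := by
      rw [measure_compl (hBmeas 0 (by omega)) (hPBtop 0), hB0, measure_univ]
      simp
    rw [ae_iff]
    simpa [Set.compl_def] using this
  -- measurability
  have hgmeas : ∀ m, 1 ≤ m → m ≤ t → Measurable[𝒲 m] (g m) := by
    intro m hm1 hmt
    have : g m = fun ω => ∏ s ∈ Finset.Icc 1 m, p s ω := funext (hg m)
    rw [this]
    refine Finset.measurable_prod _ fun s hs => ?_
    rw [Finset.mem_Icc] at hs
    exact (hpmeas s hs.1 (hs.2.trans hmt)).mono (hW s m hs.1 hs.2 hmt) le_rfl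
  have hghatmeas : ∀ m, 1 ≤ m → m ≤ t → Measurable[𝒲 m] (ghat m) := by
    intro m hm1 hmt
    have : ghat m = fun ω => ∏ s ∈ Finset.Icc 1 m, phat s ω := funext (hghat m)
    rw [this]
    refine Finset.measurable_prod _ fun s hs => ?_
    rw [Finset.mem_Icc] at hs
    exact (hphatmeas s hs.1 (hs.2.trans hmt)).mono (hW s m hs.1 hs.2 hmt) le_rfl
  -- a.e. lower bounds for g, ghat
  have hgbd : ∀ m, m ≤ t → ∀ᵐ ω ∂P, ε ^ m ≤ g m ω := by
    intro m
    induction m with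
    | zero => intro _; filter_upwards with ω; simp [hg]
    | succ n ih =>
      intro hnt
      filter_upwards [ih (by omega), hppos (n + 1) (by omega) hnt] with ω h1 h2
      have he : g (n + 1) ω = g n ω * p (n + 1) ω := by
        rw [hg, hg, Finset.prod_Icc_succ_top (by omega)]
      rw [he, pow_succ]
      exact mul_le_mul h1 h2 hε.le (le_trans (pow_nonneg hε.le n) h1)
  have hghatbd : ∀ m, m ≤ t → ∀ᵐ ω ∂P, ε ^ m ≤ ghat m ω ∧ ghat m ω ≤ 1 := by
    intro m
    induction m with
    | zero => intro _; filter_upwards with ω; simp [hghat]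
    | succ n ih =>
      intro hnt
      filter_upwards [ih (by omega), hphatbd (n + 1) (by omega) hnt] with ω h1 h2
      have he : ghat (n + 1) ω = ghat n ω * phat (n + 1) ω := by
        rw [hghat, hghat, Finset.prod_Icc_succ_top (by omega)]
      have h0n : (0:ℝ) ≤ ghat n ω := le_trans (pow_nonneg hε.le n) h1.1
      constructor
      · rw [he, pow_succ]
        exact mul_le_mul h1.1 h2.1 hε.le h0n
      · rw [he]
        calc ghat n ω * phat (n + 1) ω ≤ 1 * 1 :=
          mul_le_mul h1.2 h2.2 (le_trans hε.le h2.1) zero_le_one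
        _ = 1 := by ring
  have hghatinvbd : ∀ m, m ≤ t → ∀ᵐ ω ∂P, |(ghat m ω)⁻¹| ≤ (ε ^ m)⁻¹ := by
    intro m hmt
    filter_upwards [hghatbd m hmt] with ω h
    have h0 : 0 < ghat m ω := lt_of_lt_of_le (pow_pos hε m) h.1
    rw [abs_of_pos (inv_pos.2 h0)]
    exact inv_anti₀ (pow_pos hε m) h.1
  have hginvbd : ∀ m, m ≤ t → ∀ᵐ ω ∂P, |(g m ω)⁻¹| ≤ (ε ^ m)⁻¹ := by
    intro m hmt
    filter_upwards [hgbd m hmt] with ω h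
    have h0 : 0 < g m ω := lt_of_lt_of_le (pow_pos hε m) h
    rw [abs_of_pos (inv_pos.2 h0)]
    exact inv_anti₀ (pow_pos hε m) h
  -- p ∈ [0,1] a.e. on B (s-1)
  have hp01 : ∀ s, 1 ≤ s → s ≤ t → ∀ᵐ ω ∂P, ω ∈ B (s - 1) → (0 ≤ p s ω ∧ p s ω ≤ 1) := by
    intro s hs1 hst
    haveI : IsProbabilityMeasure (P[|B (s - 1)]) :=
      cond_isProbabilityMeasure (hPBne (s - 1) (by omega))
    set ν := P[|B (s - 1)] with hν
    have hχint : Integrable ((B s).indicator (fun _ => (1:ℝ))) ν :=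
      (integrable_const (1:ℝ)).indicator (hBmeas s hst)
    have hub : ν[(B s).indicator (fun _ => (1:ℝ))|𝒲 s] ≤ᵐ[ν] fun _ => (1:ℝ) := by
      have h1 : ν[fun _ => (1:ℝ)|𝒲 s] = fun _ => (1:ℝ) := condExp_const (h𝒲le s hs1 hst) 1
      calc ν[(B s).indicator (fun _ => (1:ℝ))|𝒲 s]
          ≤ᵐ[ν] ν[fun _ => (1:ℝ)|𝒲 s] := by
            refine condExp_mono hχint (integrable_const 1) ?_
            filter_upwards with ω
            exact Set.indicator_le_self' (fun _ _ => zero_le_one) ω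
        _ =ᵐ[ν] fun _ => (1:ℝ) := by rw [h1]
    have hlb : (fun _ => (0:ℝ)) ≤ᵐ[ν] ν[(B s).indicator (fun _ => (1:ℝ))|𝒲 s] :=
      condExp_nonneg (Filter.Eventually.of_forall fun ω =>
        Set.indicator_nonneg (fun _ _ => zero_le_one) ω)
    have := hpver s hs1 hst
    rw [← hν] at this
    rw [← haeP (s - 1) (by omega)]
    filter_upwards [this, hub, hlb] with ω h1 h2 h3
    rw [h1]
    exact ⟨h3, h2⟩
  -- g ≤ 1 on B n a.e.
  have hgle1 : ∀ n, n ≤ t → ∀ᵐ ω ∂P, ω ∈ B n → g n ω ≤ 1 := by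
    intro n hnt
    have hall : ∀ᵐ ω ∂P, ∀ s, 1 ≤ s → s ≤ n → (ω ∈ B (s - 1) → 0 ≤ p s ω ∧ p s ω ≤ 1) := by
      rw [MeasureTheory.ae_all_iff]
      intro s
      by_cases h : 1 ≤ s ∧ s ≤ n
      · filter_upwards [hp01 s h.1 (h.2.trans hnt)] with ω hω
        intro _ _; exact hω
      · filter_upwards with ω h1 h2; omega
    filter_upwards [hall] with ω hω hmem
    rw [hg]
    refine Finset.prod_le_one (fun s hs => ?_) (fun s hs => ?_) <;>
      rw [Finset.mem_Icc] at hs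
    · exact (hω s hs.1 hs.2 (hBsub (s - 1) n (by omega) hnt hmem)).1
    · exact (hω s hs.1 hs.2 (hBsub (s - 1) n (by omega) hnt hmem)).2
  -- ghat = g on B m for m ≤ m0
  have hgg : ∀ m, m ≤ m0 → ∀ᵐ ω ∂P, ω ∈ B m → ghat m ω = g m ω := by
    intro m hmm0
    have hmt : m ≤ t := le_trans (hmm0.trans hm0k) hkt
    have hall : ∀ᵐ ω ∂P, ∀ s, 1 ≤ s → s ≤ m → (ω ∈ B (s - 1) → phat s ω = p s ω) := by
      rw [MeasureTheory.ae_all_iff]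
      intro s
      by_cases h : 1 ≤ s ∧ s ≤ m
      · have := (haeP (s - 1) (by omega)).1 ((hpc s h.1 (h.2.trans hmm0)).mono
          (fun ω hω => hω))
        filter_upwards [this] with ω hω
        intro _ _; exact hω
      · filter_upwards with ω h1 h2; omega
    filter_upwards [hall] with ω hω hmem
    rw [hghat, hg]
    refine Finset.prod_congr rfl fun s hs => ?_
    rw [Finset.mem_Icc] at hs
    exact hω s hs.1 hs.2 (hBsub (s - 1) m (by omega) hmt hmem)
  -- integrability of Rhat
  have hRhataesm : ∀ n, 1 ≤ n → n ≤ k + 1 → AEStronglyMeasurable (Rhat n) P := by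
    intro n h1 h2
    rcases Nat.lt_or_ge n (k + 1) with h | h
    · exact (((hRhatmeas n h1 (by omega)).mono (h𝒲le n h1 (by omega)) le_rfl)).aestronglyMeasurable
    · have : n = k + 1 := by omega
      subst this
      rw [hRhattop]
      exact hRtopint.1
  have hRhatint : ∀ n, 1 ≤ n → n ≤ k + 1 → Integrable (Rhat n) P := by
    intro n h1 h2
    rcases Nat.lt_or_ge n (k + 1) with h | h
    · obtain ⟨C, hC⟩ := hRhatbd n h1 (by omega)
      refine Integrable.mono' (integrable_const C) (hRhataesm n h1 h2) ?_
      filter_upwards with ω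
      exact hC ω
    · have : n = k + 1 := by omega
      subst this
      rw [hRhattop]
      exact hRtopint
  -- conditioning step on P[|B m]
  have cstep : ∀ m, 1 ≤ m → m ≤ t → ∀ (W Z Z' : Ω → ℝ), Measurable[𝒲 m] W →
      (∀ᵐ ω ∂P, |W ω| ≤ (ε ^ m)⁻¹) →
      Integrable Z (P[|B m]) →
      (Z' =ᵐ[P[|B m]] (P[|B m])[Z|𝒲 m]) →
      (∫ ω, W ω * Z ω ∂(P[|B m]) = ∫ ω, W ω * Z' ω ∂(P[|B m]))
        ∧ Integrable (fun ω => W ω * Z' ω) (P[|B m]) := by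
    intro m hm1 hmt W Z Z' hWmeas hWbd hZint hZ'
    haveI : IsProbabilityMeasure (P[|B m]) := cond_isProbabilityMeasure (hPBne m hmt)
    have hWbd' : ∀ᵐ ω ∂(P[|B m]), |W ω| ≤ (ε ^ m)⁻¹ := haeOf m hmt hWbd
    have hWZint : Integrable (fun ω => W ω * Z ω) (P[|B m]) :=
      integrable_bdd_mul hZint
        (((hWmeas.mono (h𝒲le m hm1 hmt) le_rfl)).aestronglyMeasurable) _ hWbd'
    obtain ⟨heq, hint⟩ := MRPsi.integral_mul_condexp (P[|B m]) (h𝒲le m hm1 hmt)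
      hWmeas hZint hWZint
    have hae : (fun ω => W ω * ((P[|B m])[Z|𝒲 m]) ω) =ᵐ[P[|B m]] fun ω => W ω * Z' ω := by
      filter_upwards [hZ'] with ω hω
      rw [hω]
    exact ⟨heq.trans (integral_congr_ae hae), hint.congr hae⟩
  -- the IPW step
  have ipw : ∀ m, 1 ≤ m → m ≤ t → ∀ X : Ω → ℝ, Measurable[𝒲 m] X →
      Integrable ((B m).indicator (fun ω => (g m ω)⁻¹ * X ω)) P →
      (∫ ω, (B m).indicator (fun ω' => (g m ω')⁻¹ * X ω') ω ∂P
        = ∫ ω, (B (m - 1)).indicator (fun ω' => (g (m - 1) ω')⁻¹ * X ω') ω ∂P)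
      ∧ Integrable ((B (m - 1)).indicator (fun ω => (g (m - 1) ω)⁻¹ * X ω)) P := by
    intro m hm1 hmt X hX hint
    obtain ⟨n, rfl⟩ : ∃ n, m = n + 1 := ⟨m - 1, by omega⟩
    simp only [Nat.add_sub_cancel]
    haveI : IsProbabilityMeasure (P[|B n]) := cond_isProbabilityMeasure (hPBne n (by omega))
    have hcomp : (B (n + 1)).indicator (fun ω => (g (n + 1) ω)⁻¹ * X ω)
        = (B n).indicator (fun ω => ((g (n + 1) ω)⁻¹ * X ω) *
            (B (n + 1)).indicator (fun _ => (1:ℝ)) ω) := by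
      funext ω
      by_cases h1 : ω ∈ B (n + 1)
      · have h2 : ω ∈ B n := hBsub n (n + 1) (by omega) hmt h1
        simp [Set.indicator_of_mem, h1, h2]
      · by_cases h2 : ω ∈ B n <;> simp [h1, h2]
    -- convert to conditional measure
    have hstep1 : ∫ ω, (B (n + 1)).indicator (fun ω' => (g (n + 1) ω')⁻¹ * X ω') ω ∂P
        = (P (B n)).toReal * ∫ ω, ((g (n + 1) ω)⁻¹ * X ω) *
            (B (n + 1)).indicator (fun _ => (1:ℝ)) ω ∂(P[|B n]) := by
      rw [hcomp]
      exact MRPsi.integral_indicator_eq_cond P (B n) (hBmeas n (by omega)) (hPBne n (by omega))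
        (hPBtop n) _
    rw [hcomp] at hint
    have hint2 : Integrable (fun ω => ((g (n + 1) ω)⁻¹ * X ω) *
        (B (n + 1)).indicator (fun _ => (1:ℝ)) ω) (P[|B n]) :=
      (MRPsi.integrable_cond_iff P (B n) (hBmeas n (by omega)) (hPBne n (by omega))
        (hPBtop n) _).2 hint
    have hχint : Integrable ((B (n + 1)).indicator (fun _ => (1:ℝ))) (P[|B n]) :=
      (integrable_const (1:ℝ)).indicator (hBmeas (n + 1) hmt)
    have hfmeas : Measurable[𝒲 (n + 1)] (fun ω => (g (n + 1) ω)⁻¹ * X ω) :=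
      ((hgmeas (n + 1) (by omega) hmt).inv).mul hX
    obtain ⟨heq, hint3⟩ := MRPsi.integral_mul_condexp (P[|B n]) (h𝒲le (n + 1) (by omega) hmt)
      hfmeas hχint hint2
    -- replace condexp by p (n+1)
    have hpv : p (n + 1) =ᵐ[P[|B n]]
        (P[|B n])[(B (n + 1)).indicator (fun _ => (1:ℝ))|𝒲 (n + 1)] := by
      have := hpver (n + 1) (by omega) hmt
      simpa using this
    have hae1 : (fun ω => ((g (n + 1) ω)⁻¹ * X ω) *
          ((P[|B n])[(B (n + 1)).indicator (fun _ => (1:ℝ))|𝒲 (n + 1)]) ω)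
        =ᵐ[P[|B n]] (fun ω => (g n ω)⁻¹ * X ω) := by
      have h1 : ∀ᵐ ω ∂(P[|B n]), ε ^ n ≤ g n ω := haeOf n (by omega) (hgbd n (by omega))
      have h2 : ∀ᵐ ω ∂(P[|B n]), ε ≤ p (n + 1) ω :=
        haeOf n (by omega) (hppos (n + 1) (by omega) hmt)
      filter_upwards [hpv, h1, h2] with ω hp1 hg1 hp2
      rw [← hp1]
      have hgn : g n ω ≠ 0 := ne_of_gt (lt_of_lt_of_le (pow_pos hε n) hg1)
      have hpn : p (n + 1) ω ≠ 0 := ne_of_gt (lt_of_lt_of_le hε hp2)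
      have he : g (n + 1) ω = g n ω * p (n + 1) ω := by
        rw [hg, hg, Finset.prod_Icc_succ_top (by omega)]
      rw [he]
      field_simp
    have hstep2 : ∫ ω, ((g (n + 1) ω)⁻¹ * X ω) *
          (B (n + 1)).indicator (fun _ => (1:ℝ)) ω ∂(P[|B n])
        = ∫ ω, (g n ω)⁻¹ * X ω ∂(P[|B n]) := heq.trans (integral_congr_ae hae1)
    have hint4 : Integrable (fun ω => (g n ω)⁻¹ * X ω) (P[|B n]) := hint3.congr hae1
    -- reinstate indicator
    have hae2 : (fun ω => (g n ω)⁻¹ * X ω) =ᵐ[P[|B n]]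
        (B n).indicator (fun ω => (g n ω)⁻¹ * X ω) := by
      filter_upwards [haemem n (by omega)] with ω hω
      rw [Set.indicator_of_mem hω]
    have hint5 : Integrable ((B n).indicator (fun ω => (g n ω)⁻¹ * X ω)) (P[|B n]) :=
      hint4.congr hae2
    have hint6 : Integrable ((B n).indicator (fun ω => (g n ω)⁻¹ * X ω)) P := by
      have := (MRPsi.integrable_cond_iff P (B n) (hBmeas n (by omega)) (hPBne n (by omega))
        (hPBtop n) _).1 hint5
      refine this.congr ?_
      filter_upwards with ω
      rw [Set.indicator_indicator, Set.inter_self]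
    refine ⟨?_, hint6⟩
    rw [hstep1, hstep2, integral_congr_ae hae2,
      MRPsi.integral_cond P (B n) (hBmeas n (by omega)), ← mul_assoc,
      mul_inv_cancel₀ (ENNReal.toReal_ne_zero.mpr ⟨hPBne n (by omega), hPBtop n⟩), one_mul]
    exact integral_congr_ae (Filter.EventuallyEq.of_eq
      (by funext ω; rw [Set.indicator_indicator, Set.inter_self]))
  -- term integrability (with ghat)
  have hTint : ∀ m, 1 ≤ m → m ≤ k → Integrable ((B m).indicator
      (fun ω' => (ghat m ω')⁻¹ * (Rhat (m + 1) ω' - Rhat m ω'))) P := by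
    intro m h1 h2
    refine Integrable.indicator ?_ (hBmeas m (h2.trans hkt))
    exact integrable_bdd_mul ((hRhatint (m + 1) (by omega) (by omega)).sub
        (hRhatint m h1 (by omega)))
      (((hghatmeas m h1 (h2.trans hkt)).mono (h𝒲le m h1 (h2.trans hkt)) le_rfl)).inv.aestronglyMeasurable
      ((ε ^ m)⁻¹) (hghatinvbd m (h2.trans hkt))
  -- integrability of g-weighted indicator terms
  have hgind : ∀ n X, 1 ≤ n → n ≤ k → Integrable X P → MeasurableSet (B n) →
      Integrable ((B n).indicator (fun ω => (g n ω)⁻¹ * X ω)) P := by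
    intro n X h1 h2 hX hBn
    refine Integrable.indicator ?_ hBn
    exact integrable_bdd_mul hX
      (((hgmeas n h1 (h2.trans hkt)).mono (h𝒲le n h1 (h2.trans hkt)) le_rfl)).inv.aestronglyMeasurable
      ((ε ^ n)⁻¹) (hginvbd n (h2.trans hkt))
  -- the "a" sequence
  set a : ℕ → ℝ := fun n =>
    ∫ ω, (B n).indicator (fun ω' => (g n ω')⁻¹ * Rhat (n + 1) ω') ω ∂P with ha_def
  -- Rhat → R a.e. under P[|B m] at level m+1, for m0 < m+1 (i.e. m0 ≤ m), m ≤ k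
  have hRhtop : ∀ m, m0 ≤ m → m ≤ k → Rhat (m + 1) =ᵐ[P[|B m]] R (m + 1) := by
    intro m hm0 hmk
    rcases Nat.lt_or_ge m k with h | h
    · have := hRc (m + 1) (by omega) (by omega)
      simpa using this
    · have : m = k := by omega
      subst this
      rw [hRhattop]
  -- zero terms for m > m0
  have hzero : ∀ m, 1 ≤ m → m ≤ k → m0 < m → ∫ ω, (B m).indicator
      (fun ω' => (ghat m ω')⁻¹ * (Rhat (m + 1) ω' - Rhat m ω')) ω ∂P = 0 := by
    intro m h1 h2 h3
    have hmt : m ≤ t := h2.trans hkt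
    haveI : IsProbabilityMeasure (P[|B m]) := cond_isProbabilityMeasure (hPBne m hmt)
    rw [MRPsi.integral_indicator_eq_cond P (B m) (hBmeas m hmt) (hPBne m hmt) (hPBtop m)]
    have hRm : Rhat m =ᵐ[P[|B m]] R m :=
      haemono (m - 1) m (by omega) hmt (hRc m h3 h2)
    have hRm1 : Rhat (m + 1) =ᵐ[P[|B m]] R (m + 1) := hRhtop m (by omega) h2
    have hZint : Integrable (R (m + 1)) (P[|B m]) :=
      (MRPsi.integrable_cond_of_integrable P (B m) (hPBne m hmt)
        (hRhatint (m + 1) (by omega) (by omega))).congr hRm1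
    obtain ⟨heq, hWR⟩ := cstep m h1 hmt (fun ω => (ghat m ω)⁻¹) (R (m + 1)) (R m)
      (hghatmeas m h1 hmt).inv (hghatinvbd m hmt) hZint (hRver m h1 h2)
    have hWZ1 : Integrable (fun ω => (ghat m ω)⁻¹ * R (m + 1) ω) (P[|B m]) :=
      integrable_bdd_mul hZint
        (((hghatmeas m h1 hmt).mono (h𝒲le m h1 hmt) le_rfl)).inv.aestronglyMeasurable
        ((ε ^ m)⁻¹) (haeOf m hmt (hghatinvbd m hmt))
    have hae : (fun ω => (ghat m ω)⁻¹ * (Rhat (m + 1) ω - Rhat m ω)) =ᵐ[P[|B m]]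
        (fun ω => (ghat m ω)⁻¹ * R (m + 1) ω - (ghat m ω)⁻¹ * R m ω) := by
      filter_upwards [hRm, hRm1] with ω e1 e2
      rw [e1, e2]; ring
    rw [integral_congr_ae hae, integral_sub hWZ1 hWR, heq, sub_self, mul_zero]
  -- telescoping terms for m ≤ m0
  have htele : ∀ m, 1 ≤ m → m ≤ m0 → ∫ ω, (B m).indicator
      (fun ω' => (ghat m ω')⁻¹ * (Rhat (m + 1) ω' - Rhat m ω')) ω ∂P = a m - a (m - 1) := by
    intro m h1 h2
    have hmk : m ≤ k := h2.trans hm0k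
    have hmt : m ≤ t := hmk.trans hkt
    -- replace ghat by g
    have hstepg : ∫ ω, (B m).indicator
        (fun ω' => (ghat m ω')⁻¹ * (Rhat (m + 1) ω' - Rhat m ω')) ω ∂P
        = ∫ ω, (B m).indicator
        (fun ω' => (g m ω')⁻¹ * (Rhat (m + 1) ω' - Rhat m ω')) ω ∂P := by
      refine integral_congr_ae ?_
      filter_upwards [hgg m h2] with ω hω
      by_cases h : ω ∈ B m
      · rw [Set.indicator_of_mem h, Set.indicator_of_mem h, hω h]
      · rw [Set.indicator_of_notMem h, Set.indicator_of_notMem h]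
    have hsplit : (B m).indicator (fun ω' => (g m ω')⁻¹ * (Rhat (m + 1) ω' - Rhat m ω'))
        = fun ω => (B m).indicator (fun ω' => (g m ω')⁻¹ * Rhat (m + 1) ω') ω
          - (B m).indicator (fun ω' => (g m ω')⁻¹ * Rhat m ω') ω := by
      funext ω
      by_cases h : ω ∈ B m
      · simp only [Set.indicator_of_mem h]; ring
      · simp only [Set.indicator_of_notMem h, sub_zero]
    have hi1 : Integrable ((B m).indicator (fun ω => (g m ω)⁻¹ * Rhat (m + 1) ω)) P :=
      hgind m (Rhat (m + 1)) h1 hmk (hRhatint (m + 1) (by omega) (by omega)) (hBmeas m hmt)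
    have hi2 : Integrable ((B m).indicator (fun ω => (g m ω)⁻¹ * Rhat m ω)) P :=
      hgind m (Rhat m) h1 hmk (hRhatint m h1 (by omega)) (hBmeas m hmt)
    rw [hstepg, hsplit, integral_sub hi1 hi2]
    have hipw := ipw m h1 hmt (Rhat m) (hRhatmeas m h1 hmk) hi2
    rw [hipw.1]
    have hm1 : m - 1 + 1 = m := by omega
    rw [ha_def]
    simp only [hm1]
  -- sum over k reduces to sum over m0 and telescopes
  have hsum1 : ∑ m ∈ Finset.Icc 1 k, ∫ ω, (B m).indicator
      (fun ω' => (ghat m ω')⁻¹ * (Rhat (m + 1) ω' - Rhat m ω')) ω ∂P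
      = a m0 - a 0 := by
    have e1 : ∑ m ∈ Finset.Icc 1 k, ∫ ω, (B m).indicator
        (fun ω' => (ghat m ω')⁻¹ * (Rhat (m + 1) ω' - Rhat m ω')) ω ∂P
        = ∑ m ∈ Finset.Icc 1 m0, ∫ ω, (B m).indicator
        (fun ω' => (ghat m ω')⁻¹ * (Rhat (m + 1) ω' - Rhat m ω')) ω ∂P := by
      symm
      refine Finset.sum_subset (Finset.Icc_subset_Icc_right hm0k) ?_
      intro x hx hnx
      rw [Finset.mem_Icc] at hx hnx
      exact hzero x hx.1 hx.2 (by omega)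
    rw [e1]
    exact MRPsi.sum_tele a _ m0 (fun m hm1 hm2 => htele m hm1 hm2)
  have ha0 : a 0 = ∫ ω, Rhat 1 ω ∂P := by
    rw [ha_def]
    refine integral_congr_ae ?_
    filter_upwards [haeB0] with ω hω
    rw [Set.indicator_of_mem hω]
    simp [hg]
  -- integrability part of the goal
  have hRhat1int : Integrable (Rhat 1) P := hRhatint 1 (by omega) (by omega)
  refine ⟨(integrable_finset_sum _ fun m hm => ?_).add hRhat1int, ?_⟩
  · rw [Finset.mem_Icc] at hm
    exact hTint m hm.1 hm.2
  rw [integral_add (integrable_finset_sum _ fun m hm => by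
      rw [Finset.mem_Icc] at hm; exact hTint m hm.1 hm.2) hRhat1int,
    integral_finset_sum _ (fun m hm => by
      rw [Finset.mem_Icc] at hm; exact hTint m hm.1 hm.2), hsum1, ha0]
  -- now goal: a m0 - ∫ Rhat 1 + ∫ Rhat 1 = ∫ R 1
  rw [sub_add_cancel]
  -- case m0 = 0
  rcases Nat.eq_zero_or_pos m0 with h0 | hpos
  · subst h0
    rw [ha0]
    refine integral_congr_ae ?_
    have h1 : ∀ᵐ ω ∂P, ω ∈ B 0 → Rhat 1 ω = R 1 ω :=
      (haeP 0 (by omega)).1 (show Rhat 1 =ᵐ[P[|B 0]] R 1 by simpa using hRc 1 (by omega) hk1)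
    filter_upwards [haeB0, h1] with ω h2 h3
    exact h3 h2
  -- case m0 ≥ 1: boundary + d-chain
  have hm0t : m0 ≤ t := hm0k.trans hkt
  haveI : IsProbabilityMeasure (P[|B m0]) := cond_isProbabilityMeasure (hPBne m0 hm0t)
  -- boundary: a m0 = ∫ 1_{B m0} (g m0)⁻¹ R m0 dP, and it is integrable
  have hRm01 : Rhat (m0 + 1) =ᵐ[P[|B m0]] R (m0 + 1) := hRhtop m0 le_rfl hm0k
  have hZint : Integrable (R (m0 + 1)) (P[|B m0]) :=
    (MRPsi.integrable_cond_of_integrable P (B m0) (hPBne m0 hm0t)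
      (hRhatint (m0 + 1) (by omega) (by omega))).congr hRm01
  obtain ⟨heqb, hWRb⟩ := cstep m0 hpos hm0t (fun ω => (g m0 ω)⁻¹) (R (m0 + 1)) (R m0)
    (hgmeas m0 hpos hm0t).inv (hginvbd m0 hm0t) hZint (hRver m0 hpos hm0k)
  have haem0 : (fun ω => (g m0 ω)⁻¹ * R m0 ω) =ᵐ[P[|B m0]]
      (B m0).indicator (fun ω => (g m0 ω)⁻¹ * R m0 ω) := by
    filter_upwards [haemem m0 hm0t] with ω hω
    rw [Set.indicator_of_mem hω]
  have hbint : Integrable ((B m0).indicator (fun ω => (g m0 ω)⁻¹ * R m0 ω)) P := by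
    have h5 : Integrable ((B m0).indicator (fun ω => (g m0 ω)⁻¹ * R m0 ω)) (P[|B m0]) :=
      hWRb.congr haem0
    have := (MRPsi.integrable_cond_iff P (B m0) (hBmeas m0 hm0t) (hPBne m0 hm0t)
      (hPBtop m0) _).1 h5
    refine this.congr ?_
    filter_upwards with ω
    rw [Set.indicator_indicator, Set.inter_self]
  have hboundary : a m0 = ∫ ω, (B m0).indicator (fun ω' => (g m0 ω')⁻¹ * R m0 ω') ω ∂P := by
    show ∫ ω, (B m0).indicator (fun ω' => (g m0 ω')⁻¹ * Rhat (m0 + 1) ω') ω ∂P = _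
    rw [MRPsi.integral_indicator_eq_cond P (B m0) (hBmeas m0 hm0t) (hPBne m0 hm0t) (hPBtop m0)]
    have e1 : ∫ ω, (g m0 ω)⁻¹ * Rhat (m0 + 1) ω ∂(P[|B m0])
        = ∫ ω, (g m0 ω)⁻¹ * R (m0 + 1) ω ∂(P[|B m0]) := by
      refine integral_congr_ae ?_
      filter_upwards [hRm01] with ω hω
      rw [hω]
    rw [e1, heqb, integral_congr_ae haem0,
      MRPsi.integral_cond P (B m0) (hBmeas m0 hm0t), ← mul_assoc,
      mul_inv_cancel₀ (ENNReal.toReal_ne_zero.mpr ⟨hPBne m0 hm0t, hPBtop m0⟩), one_mul]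
    exact integral_congr_ae (Filter.EventuallyEq.of_eq
      (by funext ω; rw [Set.indicator_indicator, Set.inter_self]))
  -- d-chain
  have dchain : ∀ m, 1 ≤ m → m ≤ m0 →
      Integrable ((B m).indicator (fun ω => (g m ω)⁻¹ * R m ω)) P →
      ∫ ω, (B m).indicator (fun ω' => (g m ω')⁻¹ * R m ω') ω ∂P = ∫ ω, R 1 ω ∂P := by
    intro m
    induction m with
    | zero => omega
    | succ n ih =>
      intro h1 h2 hint
      have hnk : n + 1 ≤ k := h2.trans hm0k
      have hnt : n + 1 ≤ t := hnk.trans hkt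
      obtain ⟨heq1, hint1⟩ := ipw (n + 1) (by omega) hnt (R (n + 1))
        (hRmeas (n + 1) (by omega) hnk) hint
      simp only [Nat.add_sub_cancel] at heq1 hint1
      rw [heq1]
      rcases Nat.eq_zero_or_pos n with hn0 | hn1
      · subst hn0
        refine integral_congr_ae ?_
        filter_upwards [haeB0] with ω hω
        rw [Set.indicator_of_mem hω]
        simp [hg]
      -- tower step at level n
      haveI : IsProbabilityMeasure (P[|B n]) := cond_isProbabilityMeasure (hPBne n (by omega))
      have hiν : Integrable (fun ω => (g n ω)⁻¹ * R (n + 1) ω) (P[|B n]) :=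
        (MRPsi.integrable_cond_iff P (B n) (hBmeas n (by omega)) (hPBne n (by omega))
          (hPBtop n) _).2 hint1
      have hg1 : ∀ᵐ ω ∂(P[|B n]), 1 ≤ (g n ω)⁻¹ := by
        have h3 : ∀ᵐ ω ∂(P[|B n]), ω ∈ B n → g n ω ≤ 1 :=
          haeOf n (by omega) (hgle1 n (by omega))
        have h4 : ∀ᵐ ω ∂(P[|B n]), ε ^ n ≤ g n ω := haeOf n (by omega) (hgbd n (by omega))
        filter_upwards [h3, h4, haemem n (by omega)] with ω e3 e4 e5
        have := inv_anti₀ (lt_of_lt_of_le (pow_pos hε n) e4) (e3 e5)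
        simpa using this
      have hZν : Integrable (R (n + 1)) (P[|B n]) := by
        refine Integrable.mono' hiν.abs
          (((hRmeas (n + 1) (by omega) hnk).mono (h𝒲le (n + 1) (by omega) hnt)
            le_rfl)).aestronglyMeasurable ?_
        filter_upwards [hg1, haeOf n (by omega) (hgbd n (by omega))] with ω e1 e2
        have hgpos : 0 < g n ω := lt_of_lt_of_le (pow_pos hε n) e2
        rw [abs_mul, abs_of_pos (inv_pos.2 hgpos)]
        calc ‖R (n + 1) ω‖ = |R (n + 1) ω| := rfl
          _ ≤ (g n ω)⁻¹ * |R (n + 1) ω| := le_mul_of_one_le_left (abs_nonneg _) e1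
      obtain ⟨heq2, hWR2⟩ := cstep n hn1 (by omega) (fun ω => (g n ω)⁻¹) (R (n + 1)) (R n)
        (hgmeas n hn1 (by omega)).inv (hginvbd n (by omega)) hZν (hRver n hn1 (by omega))
      have haen : (fun ω => (g n ω)⁻¹ * R n ω) =ᵐ[P[|B n]]
          (B n).indicator (fun ω => (g n ω)⁻¹ * R n ω) := by
        filter_upwards [haemem n (by omega)] with ω hω
        rw [Set.indicator_of_mem hω]
      have hnint : Integrable ((B n).indicator (fun ω => (g n ω)⁻¹ * R n ω)) P := by
        have h5 := (MRPsi.integrable_cond_iff P (B n) (hBmeas n (by omega)) (hPBne n (by omega))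
          (hPBtop n) _).1 (hWR2.congr haen)
        refine h5.congr ?_
        filter_upwards with ω
        rw [Set.indicator_indicator, Set.inter_self]
      have hstep : ∫ ω, (B n).indicator (fun ω' => (g n ω')⁻¹ * R (n + 1) ω') ω ∂P
          = ∫ ω, (B n).indicator (fun ω' => (g n ω')⁻¹ * R n ω') ω ∂P := by
        rw [MRPsi.integral_indicator_eq_cond P (B n) (hBmeas n (by omega)) (hPBne n (by omega))
          (hPBtop n)]
        rw [heq2, integral_congr_ae haen,
          MRPsi.integral_cond P (B n) (hBmeas n (by omega)), ← mul_assoc,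
          mul_inv_cancel₀ (ENNReal.toReal_ne_zero.mpr ⟨hPBne n (by omega), hPBtop n⟩), one_mul]
        exact integral_congr_ae (Filter.EventuallyEq.of_eq
          (by funext ω; rw [Set.indicator_indicator, Set.inter_self]))
      rw [hstep]
      exact ih hn1 (by omega) hnint
  rw [hboundary]
  exact dchain m0 hpos le_rfl hbint





end MRPsi

/-- Multiple robustness of the one-step functional for `ψ_t`: under the
core setup with horizon `t`, integrable observed outcomes `Y 0, …, Y t`, the true
recursions `Q j k m` (for `k ∈ {1,…,t}`, `j ∈ {k-1,k}`) with functionals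
`φ_{j,k} = E_P[Q j k 1]`, and candidate nuisances `phat` (with `ε ≤ phat m ≤ 1` a.s.,
cumulative products `ghat`) and bounded `Qhat j k m` (with `Qhat j k (k+1) = Y j`):
if for each `k` there is `m₀ k ∈ {0,…,k}` with `phat m = p m` a.s. under `P[|B (m-1)]`
for all `m ≤ m₀ k`, and `Qhat j k m = Q j k m` a.s. under `P[|B (m-1)]` for all
`m₀ k < m ≤ k`, `j ∈ {k-1,k}`, then `E_P[ψ̃] = ψ_t`, where
`ψ̃ = Y 0 + Σ_{k=1}^t (φ̃_{k,k} - φ̃_{k-1,k})`,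
`φ̃_{j,k} = Σ_{m=1}^k 1_{B m} (ghat m)⁻¹ (Qhat j k (m+1) - Qhat j k m) + Qhat j k 1`,
and `ψ_t = E_P[Y 0] + Σ_{k=1}^t (φ_{k,k} - φ_{k-1,k})`. -/
theorem multiple_robustness_psi
    {Ω : Type*} [inst : MeasurableSpace Ω] (P : Measure Ω) [IsProbabilityMeasure P]
    (t : ℕ) (ht : 1 ≤ t)
    (B : ℕ → Set Ω)
    (hBmeas : ∀ m, m ≤ t → MeasurableSet (B m))
    (hBmono : ∀ m, m < t → B (m + 1) ⊆ B m)
    (hB0 : P (B 0) = 1)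
    (hBt : 0 < P (B t))
    (𝒲 : ℕ → MeasurableSpace Ω)
    (h𝒲le : ∀ m, 1 ≤ m → m ≤ t → 𝒲 m ≤ inst)
    (h𝒲mono : ∀ m, 1 ≤ m → m < t → 𝒲 m ≤ 𝒲 (m + 1))
    (ε : ℝ) (hε : 0 < ε)
    (p : ℕ → Ω → ℝ)
    (hpmeas : ∀ m, 1 ≤ m → m ≤ t → Measurable[𝒲 m] (p m))
    (hpver : ∀ m, 1 ≤ m → m ≤ t →
      p m =ᵐ[P[|B (m - 1)]] (P[|B (m - 1)])[(B m).indicator (fun _ => (1 : ℝ))|𝒲 m])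
    (hppos : ∀ m, 1 ≤ m → m ≤ t → ∀ᵐ ω ∂P, ε ≤ p m ω)
    (g : ℕ → Ω → ℝ)
    (hg : ∀ m ω, g m ω = ∏ s ∈ Finset.Icc 1 m, p s ω)
    (Y : ℕ → Ω → ℝ)
    (hYint : ∀ s, s ≤ t → Integrable (Y s) P)
    (Q : ℕ → ℕ → ℕ → Ω → ℝ)
    (hQtop : ∀ k, 1 ≤ k → k ≤ t → ∀ j, (j = k - 1 ∨ j = k) → Q j k (k + 1) = Y j)
    (hQmeas : ∀ k, 1 ≤ k → k ≤ t → ∀ j, (j = k - 1 ∨ j = k) →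
      ∀ m, 1 ≤ m → m ≤ k → Measurable[𝒲 m] (Q j k m))
    (hQver : ∀ k, 1 ≤ k → k ≤ t → ∀ j, (j = k - 1 ∨ j = k) →
      ∀ m, 1 ≤ m → m ≤ k → Q j k m =ᵐ[P[|B m]] (P[|B m])[Q j k (m + 1)|𝒲 m])
    (phat : ℕ → Ω → ℝ)
    (hphatmeas : ∀ m, 1 ≤ m → m ≤ t → Measurable[𝒲 m] (phat m))
    (hphatbd : ∀ m, 1 ≤ m → m ≤ t → ∀ᵐ ω ∂P, ε ≤ phat m ω ∧ phat m ω ≤ 1)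
    (ghat : ℕ → Ω → ℝ)
    (hghat : ∀ m ω, ghat m ω = ∏ s ∈ Finset.Icc 1 m, phat s ω)
    (Qhat : ℕ → ℕ → ℕ → Ω → ℝ)
    (hQhattop : ∀ k, 1 ≤ k → k ≤ t → ∀ j, (j = k - 1 ∨ j = k) → Qhat j k (k + 1) = Y j)
    (hQhatmeas : ∀ k, 1 ≤ k → k ≤ t → ∀ j, (j = k - 1 ∨ j = k) →
      ∀ m, 1 ≤ m → m ≤ k → Measurable[𝒲 m] (Qhat j k m))
    (hQhatbd : ∀ k, 1 ≤ k → k ≤ t → ∀ j, (j = k - 1 ∨ j = k) →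
      ∀ m, 1 ≤ m → m ≤ k → ∃ C, ∀ ω, |Qhat j k m ω| ≤ C)
    (m₀ : ℕ → ℕ) (hm₀ : ∀ k, 1 ≤ k → k ≤ t → m₀ k ≤ k)
    (hpcorrect : ∀ k, 1 ≤ k → k ≤ t →
      ∀ m, 1 ≤ m → m ≤ m₀ k → phat m =ᵐ[P[|B (m - 1)]] p m)
    (hQcorrect : ∀ k, 1 ≤ k → k ≤ t → ∀ j, (j = k - 1 ∨ j = k) →
      ∀ m, m₀ k < m → m ≤ k → Qhat j k m =ᵐ[P[|B (m - 1)]] Q j k m) :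
    ∫ ω, (Y 0 ω + ∑ k ∈ Finset.Icc 1 t,
        (((∑ m ∈ Finset.Icc 1 k, (B m).indicator
            (fun ω' => (ghat m ω')⁻¹ * (Qhat k k (m + 1) ω' - Qhat k k m ω')) ω)
          + Qhat k k 1 ω)
        - ((∑ m ∈ Finset.Icc 1 k, (B m).indicator
            (fun ω' => (ghat m ω')⁻¹ * (Qhat (k - 1) k (m + 1) ω' - Qhat (k - 1) k m ω')) ω)
          + Qhat (k - 1) k 1 ω))) ∂P
    = (∫ ω, Y 0 ω ∂P)
      + ∑ k ∈ Finset.Icc 1 t, ((∫ ω, Q k k 1 ω ∂P) - ∫ ω, Q (k - 1) k 1 ω ∂P) := by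
  have hkey : ∀ k, 1 ≤ k → k ≤ t → ∀ j, (j = k - 1 ∨ j = k) →
      Integrable (fun ω => (∑ m ∈ Finset.Icc 1 k, (B m).indicator
          (fun ω' => (ghat m ω')⁻¹ * (Qhat j k (m + 1) ω' - Qhat j k m ω')) ω)
          + Qhat j k 1 ω) P
      ∧ ∫ ω, ((∑ m ∈ Finset.Icc 1 k, (B m).indicator
          (fun ω' => (ghat m ω')⁻¹ * (Qhat j k (m + 1) ω' - Qhat j k m ω')) ω)
          + Qhat j k 1 ω) ∂P = ∫ ω, Q j k 1 ω ∂P := by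
    intro k hk1 hkt j hj
    have hjt : j ≤ t := by rcases hj with h | h <;> omega
    refine MRPsi.keyA P t B hBmeas hBmono hB0 hBt 𝒲 h𝒲le h𝒲mono ε hε p hpmeas hpver hppos
      g hg phat hphatmeas hphatbd ghat hghat k hk1 hkt (Q j k) (Qhat j k) ?_ ?_
      (fun m h1 h2 => hQmeas k hk1 hkt j hj m h1 h2)
      (fun m h1 h2 => hQver k hk1 hkt j hj m h1 h2)
      (fun m h1 h2 => hQhatmeas k hk1 hkt j hj m h1 h2)
      (fun m h1 h2 => hQhatbd k hk1 hkt j hj m h1 h2)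
      (m₀ k) (hm₀ k hk1 hkt)
      (fun m h1 h2 => hpcorrect k hk1 hkt m h1 h2)
      (fun m h1 h2 => hQcorrect k hk1 hkt j hj m h1 h2)
    · rw [hQtop k hk1 hkt j hj]
      exact hYint j hjt
    · rw [hQhattop k hk1 hkt j hj, hQtop k hk1 hkt j hj]
  have hIk : ∀ k ∈ Finset.Icc 1 t, Integrable (fun ω =>
      (((∑ m ∈ Finset.Icc 1 k, (B m).indicator
          (fun ω' => (ghat m ω')⁻¹ * (Qhat k k (m + 1) ω' - Qhat k k m ω')) ω)
        + Qhat k k 1 ω)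
      - ((∑ m ∈ Finset.Icc 1 k, (B m).indicator
          (fun ω' => (ghat m ω')⁻¹ * (Qhat (k - 1) k (m + 1) ω' - Qhat (k - 1) k m ω')) ω)
        + Qhat (k - 1) k 1 ω))) P := by
    intro k hk
    rw [Finset.mem_Icc] at hk
    exact ((hkey k hk.1 hk.2 k (Or.inr rfl)).1).sub ((hkey k hk.1 hk.2 (k - 1) (Or.inl rfl)).1)
  rw [integral_add (hYint 0 (by omega)) (integrable_finset_sum _ hIk),
    integral_finset_sum _ hIk]
  congr 1
  refine Finset.sum_congr rfl fun k hk => ?_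
  rw [Finset.mem_Icc] at hk
  rw [integral_sub ((hkey k hk.1 hk.2 k (Or.inr rfl)).1)
      ((hkey k hk.1 hk.2 (k - 1) (Or.inl rfl)).1),
    (hkey k hk.1 hk.2 k (Or.inr rfl)).2, (hkey k hk.1 hk.2 (k - 1) (Or.inl rfl)).2]
end

section
/- Parallel trends holds under additive unmeasured confounding in a structural equation model with treatment-covariate feedback (the claim verified for the paper's simulation design): Let (Ω, 𝓕, P) be a probability space carrying mutually independent random elements U, (δ_t)_{t=0}^τ, (η_t)_{t=0}^τ, (ε_t)_{t=0}^τ, where each ε_t is integrable with E[ε_t] = 0 and δ_t, η_t take values in standard Borel spaces. Fix a countable treatment space 𝒜, a target regime (a*₀,…,a*_τ) ∈ 𝒜^{τ+1}, and measurable functions f_t, a_t, b_t with each b_t bounded. Define recursively the observed process: W₀ = f₀(δ₀); for t ≥ 1, W_t = f_t(W̄_{t−1}, A_{t−1}, δ_t); A_t = a_t(W̄_t, Ā_{t−1}, U, η_t); Y_t = b_t(W̄_t, A_t) + U + ε_t; and the counterfactual process: W₀* = W₀; W_t* = f_t(W̄*_{t−1}, a*_{t−1}, δ_t); Y_t* =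 b_t(W̄*_t, a*_t) + U + ε_t. Let B_m = {A₀ = a*₀, …, A_m = a*_m} and 𝒲_k = σ(W₀,…,W_k). Then for every t ∈ {1,…,τ} and every k ∈ {0,…,t−1} with P(B_k) > 0, there exists a 𝒲_k-measurable random variable h that is simultaneously a version of the conditional expectation of Y_t* − Y_{t−1}* given 𝒲_k under P(·|B_{k−1}) and a version of the conditional expectation of Y_t* − Y_{t−1}* given 𝒲_k under P(·|B_k) (where B_{−1} := Ω); that is, the conditional parallel trends assumption holds for the regime ā* even though U confounds treatment and outcome and covariates are affected by prior treatment. -/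
open MeasureTheory ProbabilityTheory

-- Doob–Dynkin factorization, simple function case (ℝ≥0∞)
lemma pt_factor_simple {Ω β : Type*} [mβ : MeasurableSpace β] (g : Ω → β)
    (s : @SimpleFunc Ω (mβ.comap g) ENNReal) :
    ∃ φ : β → ENNReal, Measurable φ ∧ ⇑s = φ ∘ g := by
  induction s using SimpleFunc.induction with
  | const c hs =>
    rename_i S
    obtain ⟨T, hT, hTg⟩ := id hs
    refine ⟨T.indicator fun _ => c, measurable_const.indicator hT, ?_⟩
    classical
    funext ω
    simp only [SimpleFunc.coe_piecewise, SimpleFunc.coe_const, SimpleFunc.coe_zero,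
      Set.piecewise_eq_indicator, Function.comp_apply]
    by_cases h : ω ∈ S
    · rw [Set.piecewise_eq_of_mem _ _ _ h, Set.indicator_of_mem (by rw [← hTg] at h; exact h)]
      rfl
    · rw [Set.piecewise_eq_of_notMem _ _ _ h,
        Set.indicator_of_notMem (by rw [← hTg] at h; exact h)]
      rfl
  | add _ h₁ h₂ =>
    obtain ⟨φ₁, hφ₁, he₁⟩ := h₁
    obtain ⟨φ₂, hφ₂, he₂⟩ := h₂
    exact ⟨φ₁ + φ₂, hφ₁.add hφ₂, by funext ω; simp [he₁, he₂, Function.comp]⟩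

lemma pt_factor_ennreal {Ω β : Type*} [mβ : MeasurableSpace β] (g : Ω → β)
    {F : Ω → ENNReal} (hF : Measurable[mβ.comap g] F) :
    ∃ φ : β → ENNReal, Measurable φ ∧ F = φ ∘ g := by
  choose φ hφ hφg using fun n => pt_factor_simple g (@SimpleFunc.eapprox Ω (mβ.comap g) F n)
  refine ⟨fun x => ⨆ n, φ n x, Measurable.iSup hφ, ?_⟩
  funext ω
  rw [← @SimpleFunc.iSup_eapprox_apply Ω (mβ.comap g) F hF ω]
  simp only [Function.comp_apply]
  congr 1
  funext n
  rw [hφg n]; rfl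

/-- Doob–Dynkin factorization for real-valued functions. -/
lemma pt_factor_real {Ω β : Type*} [mβ : MeasurableSpace β] (g : Ω → β)
    {F : Ω → ℝ} (hF : Measurable[mβ.comap g] F) :
    ∃ φ : β → ℝ, Measurable φ ∧ F = φ ∘ g := by
  obtain ⟨φp, hφp, hp⟩ := pt_factor_ennreal g (hF.ennreal_ofReal)
  obtain ⟨φm, hφm, hm⟩ := pt_factor_ennreal g (hF.neg.ennreal_ofReal)
  refine ⟨fun x => (φp x).toReal - (φm x).toReal, (hφp.ennreal_toReal).sub hφm.ennreal_toReal, ?_⟩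
  funext ω
  have hp' : ENNReal.ofReal (F ω) = φp (g ω) := congrFun hp ω
  have hm' : ENNReal.ofReal (-F ω) = φm (g ω) := congrFun hm ω
  simp only [Function.comp_apply, ← hp', ← hm']
  rcases le_total 0 (F ω) with h | h
  · rw [ENNReal.toReal_ofReal h, ENNReal.ofReal_of_nonpos (by linarith), ENNReal.toReal_zero]
    ring
  · rw [ENNReal.ofReal_of_nonpos h, ENNReal.toReal_ofReal (by linarith), ENNReal.toReal_zero]
    ring

lemma pt_setIntegral_eq {Ω : Type*} [m0 : MeasurableSpace Ω] (P : Measure Ω)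
    {D : Ω → ℝ} (hD : Integrable D P) {S : Set Ω} (hS : MeasurableSet S) :
    ∫ ω in S, D ω ∂P
      = (P.withDensity (fun ω => ENNReal.ofReal (D ω)) S).toReal
        - (P.withDensity (fun ω => ENNReal.ofReal (-D ω)) S).toReal := by
  rw [integral_eq_lintegral_pos_part_sub_lintegral_neg_part hD.restrict,
    withDensity_apply _ hS, withDensity_apply _ hS]

/-- If a `m₂`-measurable integrable function has zero integral over all `m₁`-sets,
and `m₂` is independent of `mh`, then it has zero integral over all `m₁ ⊔ mh`-sets. -/
lemma pt_setIntegral_zero_sup {Ω : Type*} {m₁ m₂ mh : MeasurableSpace Ω}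
    [m0 : MeasurableSpace Ω] (P : Measure Ω)
    [IsProbabilityMeasure P]
    (hm₂ : m₂ ≤ m0) (hmh : mh ≤ m0) (hm₁₂ : m₁ ≤ m₂)
    {D : Ω → ℝ} (hD : Integrable D P) (hDm : Measurable[m₂] D)
    (hindep : Indep m₂ mh P)
    (hzero : ∀ S, MeasurableSet[m₁] S → ∫ ω in S, D ω ∂P = 0) :
    ∀ S, MeasurableSet[m₁ ⊔ mh] S → ∫ ω in S, D ω ∂P = 0 := by
  classical
  set π : Set (Set Ω) := {s | ∃ s₁ s₂, MeasurableSet[m₁] s₁ ∧ MeasurableSet[mh] s₂ ∧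
    s = s₁ ∩ s₂} with hπdef
  have hπ : IsPiSystem π := by
    rintro s ⟨s₁, s₂, hs₁, hs₂, rfl⟩ t ⟨t₁, t₂, ht₁, ht₂, rfl⟩ -
    exact ⟨s₁ ∩ t₁, s₂ ∩ t₂, MeasurableSet.inter hs₁ ht₁, MeasurableSet.inter hs₂ ht₂,
      by ext ω; simp only [Set.mem_inter_iff]; tauto⟩
  have hgen : (m₁ ⊔ mh) = MeasurableSpace.generateFrom π := by
    refine le_antisymm (sup_le ?_ ?_) (MeasurableSpace.generateFrom_le ?_)
    · intro s hs
      exact MeasurableSpace.measurableSet_generateFrom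
        ⟨s, Set.univ, hs, MeasurableSet.univ, by simp⟩
    · intro s hs
      exact MeasurableSpace.measurableSet_generateFrom
        ⟨Set.univ, s, MeasurableSet.univ, hs, by simp⟩
    · rintro s ⟨s₁, s₂, hs₁, hs₂, rfl⟩
      exact MeasurableSet.inter (le_sup_left (α := MeasurableSpace Ω) _ hs₁)
        (le_sup_right (α := MeasurableSpace Ω) _ hs₂)
  have hle : m₁ ⊔ mh ≤ m0 := sup_le (hm₁₂.trans hm₂) hmh
  -- zero integral on π-sets
  have hkey : ∀ s ∈ π, ∫ ω in s, D ω ∂P = 0 := by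
    rintro s ⟨s₁, s₂, hs₁, hs₂, rfl⟩
    have hs₁0 : MeasurableSet[m0] s₁ := (hm₁₂.trans hm₂) _ hs₁
    have hs₂0 : MeasurableSet[m0] s₂ := hmh _ hs₂
    have hXm : Measurable[m₂] (s₁.indicator D) := hDm.indicator (hm₁₂ _ hs₁)
    have hYm : Measurable[mh] (s₂.indicator (fun _ => (1:ℝ))) :=
      @measurable_const ℝ Ω _ mh 1 |>.indicator hs₂
    have hIF : IndepFun (s₁.indicator D) (s₂.indicator (fun _ => (1:ℝ))) P := by
      rw [indepFun_iff_measure_inter_preimage_eq_mul]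
      intro u v hu hv
      exact (Indep_iff _ _ _).1 hindep _ _ (hXm hu) (hYm hv)
    have hXi : Integrable (s₁.indicator D) P := hD.indicator hs₁0
    have hYi : Integrable (s₂.indicator (fun _ => (1:ℝ))) P :=
      (integrable_const (1:ℝ)).indicator hs₂0
    have hmul : (s₁.indicator D) * (s₂.indicator (fun _ => (1:ℝ)))
        = (s₁ ∩ s₂).indicator D := by
      funext ω
      by_cases h1 : ω ∈ s₁ <;> by_cases h2 : ω ∈ s₂ <;>
        simp [Set.indicator, h1, h2]
    have hprod := hIF.integral_mul_eq_mul_integral hXi.aestronglyMeasurable hYi.aestronglyMeasurable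
    rw [hmul] at hprod
    have h1 : ∫ ω, s₁.indicator D ω ∂P = 0 := by
      rw [integral_indicator hs₁0]; exact hzero s₁ hs₁
    rw [← integral_indicator (MeasurableSet.inter hs₁0 hs₂0), hprod, h1, zero_mul]
  -- withDensity measures
  set μp := P.withDensity (fun ω => ENNReal.ofReal (D ω)) with hμp
  set μm := P.withDensity (fun ω => ENNReal.ofReal (-D ω)) with hμm
  haveI : IsFiniteMeasure μp := isFiniteMeasure_withDensity_ofReal hD.2
  haveI : IsFiniteMeasure μm := isFiniteMeasure_withDensity_ofReal hD.neg.2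
  have hint : ∀ s, MeasurableSet[m0] s → ∫ ω in s, D ω ∂P = (μp s).toReal - (μm s).toReal :=
    fun s hs => @pt_setIntegral_eq Ω m0 P D hD s hs
  have heq : ∀ s, MeasurableSet[m₁ ⊔ mh] s → μp s = μm s := by
    have htrim : μp.trim hle = μm.trim hle := by
      refine @ext_of_generate_finite Ω (m₁ ⊔ mh) (μp.trim hle) (μm.trim hle) π hgen hπ ?_ ?_ ?_
      · infer_instance
      · intro s hs
        have hsm : MeasurableSet[m₁ ⊔ mh] s :=
          hgen ▸ MeasurableSpace.measurableSet_generateFrom hs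
        rw [trim_measurableSet_eq hle hsm, trim_measurableSet_eq hle hsm]
        have h0 := hkey s hs
        rw [hint s (hle _ hsm)] at h0
        exact (ENNReal.toReal_eq_toReal_iff' (measure_ne_top _ _) (measure_ne_top _ _)).1
          (sub_eq_zero.1 h0)
      · have h0 := hzero Set.univ MeasurableSet.univ
        rw [hint Set.univ MeasurableSet.univ] at h0
        rw [trim_measurableSet_eq hle MeasurableSet.univ,
          trim_measurableSet_eq hle MeasurableSet.univ]
        exact (ENNReal.toReal_eq_toReal_iff' (measure_ne_top _ _) (measure_ne_top _ _)).1
          (sub_eq_zero.1 h0)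
    intro s hs
    rw [← trim_measurableSet_eq hle hs, ← trim_measurableSet_eq hle hs, htrim]
  intro S hS
  rw [hint S (hle _ hS), heq S hS, sub_self]

lemma pt_measurable_const' {α β : Type*} [MeasurableSpace β] (m : MeasurableSpace α) (b : β) :
    Measurable[m] (fun _ : α => b) := @measurable_const β α _ m b

lemma pt_measurable_pi_lambda {α ι : Type*} [Countable ι] {π : ι → Type*}
    [∀ a, MeasurableSpace (π a)] (m : MeasurableSpace α) (f : α → ∀ a, π a)
    (hf : ∀ a, Measurable[m] fun c => f c a) : Measurable[m] f :=
  measurable_pi_lambda f hf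

lemma pt_comap_le {α β : Type*} (m : MeasurableSpace α) (mb : MeasurableSpace β)
    (f : α → β) (hf : Measurable[m] f) : MeasurableSpace.comap f mb ≤ m :=
  Measurable.comap_le hf

lemma pt_of_comap_le {α β : Type*} (m : MeasurableSpace α) (mb : MeasurableSpace β)
    (f : α → β) (h : MeasurableSpace.comap f mb ≤ m) : Measurable[m] f :=
  Measurable.of_comap_le h

lemma pt_inter {α : Type*} (m : MeasurableSpace α) {s t : Set α}
    (hs : MeasurableSet[m] s) (ht : MeasurableSet[m] t) : MeasurableSet[m] (s ∩ t) :=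
  MeasurableSet.inter hs ht

lemma pt_iInter {α : Type*} (m : MeasurableSpace α) {ι : Sort*} [Countable ι] {s : ι → Set α}
    (h : ∀ i, MeasurableSet[m] (s i)) : MeasurableSet[m] (⋂ i, s i) :=
  MeasurableSet.iInter h

lemma pt_indep_mono {Ω : Type*} {ma mb ma' mb' : MeasurableSpace Ω}
    [m0 : MeasurableSpace Ω] {P : Measure Ω}
    (h : Indep ma mb P) (ha : ma' ≤ ma) (hb : mb' ≤ mb) : Indep ma' mb' P := by
  rw [Indep_iff] at h ⊢
  exact fun t1 t2 h1 h2 => h t1 t2 (ha _ h1) (hb _ h2)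


/-- Parallel trends holds under additive unmeasured confounding in a
structural equation model with treatment-covariate feedback (the claim verified for the
paper's simulation design). On a probability space carrying mutually independent random
elements `U` (real-valued), `δ t`, `η t` (valued in standard Borel spaces) and
`e t` (integrable, mean-zero real noise), with countable discrete treatment space `𝒜`,
target regime `astar`, and measurable structural functions `f₀, f, a, b` (each `b t`
bounded), define the observed process `W, A, Y` and the counterfactual process
`Wstar, Ystar` by the structural equations; let `B m = {A 0 = astar 0, …, A m = astar m}`
and `𝒲 k = σ(W 0, …, W k)`. Then for every `1 ≤ t ≤ τ` and `k < t` with `P (B k) > 0`,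
there is a `𝒲 k`-measurable `h` that is simultaneously a version of
`E[Ystar t - Ystar (t-1) | 𝒲 k]` under `P[|B (k-1)]` (with `B₋₁ := Ω`, i.e. under `P`
when `k = 0`) and under `P[|B k]`: the conditional parallel trends assumption holds for
the regime `astar` even though `U` confounds treatment and outcome and covariates are
affected by prior treatment. -/
theorem parallel_trends_additive_confounding
    {Ω : Type*} [inst : MeasurableSpace Ω] (P : Measure Ω) [IsProbabilityMeasure P]
    (τ : ℕ)
    {𝒜 : Type*} [MeasurableSpace 𝒜] [MeasurableSingletonClass 𝒜] [Countable 𝒜]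
    {𝒳 : Type*} [MeasurableSpace 𝒳] [StandardBorelSpace 𝒳]
    {D : Type*} [MeasurableSpace D] [StandardBorelSpace D]
    {E : Type*} [MeasurableSpace E] [StandardBorelSpace E]
    (U : Ω → ℝ) (hU : Measurable U)
    (δ : ℕ → Ω → D) (hδ : ∀ s, Measurable (δ s))
    (η : ℕ → Ω → E) (hη : ∀ s, Measurable (η s))
    (e : ℕ → Ω → ℝ) (he : ∀ s, Measurable (e s))
    (heint : ∀ s, s ≤ τ → Integrable (e s) P)
    (hemean : ∀ s, s ≤ τ → ∫ ω, e s ω ∂P = 0)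
    (hindep : iIndep
      (Sum.elim (fun _ : Unit => MeasurableSpace.comap U inferInstance)
        (Sum.elim (fun s : ℕ => MeasurableSpace.comap (δ s) inferInstance)
          (Sum.elim (fun s : ℕ => MeasurableSpace.comap (η s) inferInstance)
            (fun s : ℕ => MeasurableSpace.comap (e s) inferInstance))))
      P)
    (astar : ℕ → 𝒜)
    (f₀ : D → 𝒳) (hf₀ : Measurable f₀)
    (f : (s : ℕ) → (Fin s → 𝒳) → 𝒜 → D → 𝒳)
    (hf : ∀ s, Measurable fun q : (Fin s → 𝒳) × 𝒜 × D => f s q.1 q.2.1 q.2.2)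
    (a : (s : ℕ) → (Fin (s + 1) → 𝒳) → (Fin s → 𝒜) → ℝ → E → 𝒜)
    (ha : ∀ s, Measurable fun q : (Fin (s + 1) → 𝒳) × (Fin s → 𝒜) × ℝ × E =>
      a s q.1 q.2.1 q.2.2.1 q.2.2.2)
    (b : (s : ℕ) → (Fin (s + 1) → 𝒳) → 𝒜 → ℝ)
    (hb : ∀ s, Measurable fun q : (Fin (s + 1) → 𝒳) × 𝒜 => b s q.1 q.2)
    (hbbd : ∀ s, ∃ C, ∀ x aa, |b s x aa| ≤ C)
    (W : ℕ → Ω → 𝒳) (A : ℕ → Ω → 𝒜) (Y : ℕ → Ω → ℝ)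
    (hW0 : ∀ ω, W 0 ω = f₀ (δ 0 ω))
    (hWt : ∀ s, 1 ≤ s → ∀ ω, W s ω = f s (fun r : Fin s => W r ω) (A (s - 1) ω) (δ s ω))
    (hA : ∀ s ω,
      A s ω = a s (fun r : Fin (s + 1) => W r ω) (fun r : Fin s => A r ω) (U ω) (η s ω))
    (hY : ∀ s ω, Y s ω = b s (fun r : Fin (s + 1) => W r ω) (A s ω) + U ω + e s ω)
    (Wstar : ℕ → Ω → 𝒳) (Ystar : ℕ → Ω → ℝ)
    (hWstar0 : ∀ ω, Wstar 0 ω = W 0 ω)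
    (hWstart : ∀ s, 1 ≤ s → ∀ ω,
      Wstar s ω = f s (fun r : Fin s => Wstar r ω) (astar (s - 1)) (δ s ω))
    (hYstar : ∀ s ω, Ystar s ω = b s (fun r : Fin (s + 1) => Wstar r ω) (astar s) + U ω + e s ω)
    (B : ℕ → Set Ω) (hB : ∀ m, B m = {ω | ∀ s, s ≤ m → A s ω = astar s})
    (𝒲 : ℕ → MeasurableSpace Ω)
    (h𝒲 : ∀ k, 𝒲 k =
      MeasurableSpace.comap (fun ω (r : Fin (k + 1)) => W r ω) MeasurableSpace.pi) :
    ∀ t, 1 ≤ t → t ≤ τ → ∀ k, k < t → 0 < P (B k) →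
      ∃ h : Ω → ℝ, Measurable[𝒲 k] h ∧
        h =ᵐ[if k = 0 then P else P[|B (k - 1)]]
          (if k = 0 then P else P[|B (k - 1)])[fun ω => Ystar t ω - Ystar (t - 1) ω|𝒲 k] ∧
        h =ᵐ[P[|B k]] (P[|B k])[fun ω => Ystar t ω - Ystar (t - 1) ω|𝒲 k] := by

  classical
  -- ambient measurability of the index family
  set M : (Unit ⊕ (ℕ ⊕ (ℕ ⊕ ℕ))) → MeasurableSpace Ω :=
    (Sum.elim (fun _ : Unit => MeasurableSpace.comap U inferInstance)
      (Sum.elim (fun s : ℕ => MeasurableSpace.comap (δ s) inferInstance)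
        (Sum.elim (fun s : ℕ => MeasurableSpace.comap (η s) inferInstance)
          (fun s : ℕ => MeasurableSpace.comap (e s) inferInstance)))) with hM
  have hMle : ∀ i, M i ≤ inst := by
    rintro (u | (s | (s | s)))
    · exact hU.comap_le
    · exact (hδ s).comap_le
    · exact (hη s).comap_le
    · exact (he s).comap_le
  set mδ' : Unit → MeasurableSpace Ω := fun _ => ⨆ s, MeasurableSpace.comap (δ s) inferInstance
    with hmδ'
  set mH' : Unit → MeasurableSpace Ω := fun _ => MeasurableSpace.comap U inferInstance ⊔
    ⨆ s, MeasurableSpace.comap (η s) inferInstance with hmH'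
  have hmδle : mδ' () ≤ inst := iSup_le fun s => (hδ s).comap_le
  have hmHle : mH' () ≤ inst := sup_le hU.comap_le (iSup_le fun s => (hη s).comap_le)
  have hsuple : mδ' () ⊔ mH' () ≤ inst := sup_le hmδle hmHle
  -- independence of the δ-block from the (U, η)-block
  have hIndep1 : Indep (mδ' ()) (mH' ()) P := by
    set S : Set (Unit ⊕ (ℕ ⊕ (ℕ ⊕ ℕ))) := Set.range (fun s : ℕ => Sum.inr (Sum.inl s)) with hS
    have h1 : (⨆ i ∈ S, M i) = mδ' () := by rw [hS, iSup_range]; rfl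
    have h2 : mH' () ≤ ⨆ i ∈ Sᶜ, M i := by
      refine sup_le ?_ (iSup_le fun s => ?_)
      · exact le_biSup M (i := Sum.inl ()) (by simp [hS])
      · exact le_biSup M (i := Sum.inr (Sum.inr (Sum.inl s))) (by simp [hS])
    have h3 := indep_iSup_of_disjoint hMle hindep (disjoint_compl_right (a := S))
    rw [h1] at h3
    exact pt_indep_mono h3 le_rfl h2
  -- independence of each noise from everything else
  have hIndepE : ∀ s : ℕ, Indep (MeasurableSpace.comap (e s) inferInstance)
      (mδ' () ⊔ mH' ()) P := by
    intro s
    set S : Set (Unit ⊕ (ℕ ⊕ (ℕ ⊕ ℕ))) := {Sum.inr (Sum.inr (Sum.inr s))} with hS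
    have h1 : (⨆ i ∈ S, M i) = MeasurableSpace.comap (e s) inferInstance := by
      rw [hS, iSup_singleton]; rfl
    have h2 : mδ' () ⊔ mH' () ≤ ⨆ i ∈ Sᶜ, M i := by
      refine sup_le (iSup_le fun r => ?_) (sup_le ?_ (iSup_le fun r => ?_))
      · exact le_biSup M (i := Sum.inr (Sum.inl r)) (by simp [hS])
      · exact le_biSup M (i := Sum.inl ()) (by simp [hS])
      · exact le_biSup M (i := Sum.inr (Sum.inr (Sum.inl r))) (by simp [hS])
    have h3 := indep_iSup_of_disjoint hMle hindep (disjoint_compl_right (a := S))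
    rw [h1] at h3
    exact pt_indep_mono h3 le_rfl h2
  -- measurability of the counterfactual covariates w.r.t. the δ-algebra
  have hδmδ : ∀ s : ℕ, Measurable[mδ' ()] (δ s) := fun s =>
    Measurable.of_comap_le (le_iSup (fun s => MeasurableSpace.comap (δ s) inferInstance) s)
  have hWstarMδ : ∀ s, Measurable[mδ' ()] (Wstar s) := by
    intro s
    induction s using Nat.strong_induction_on with
    | _ s IH =>
      match s with
      | 0 =>
        rw [show Wstar 0 = fun ω => f₀ (δ 0 ω) from funext fun ω => by rw [hWstar0, hW0]]
        exact hf₀.comp (hδmδ 0)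
      | (s+1) =>
        rw [show Wstar (s+1) = fun ω =>
            f (s+1) (fun r : Fin (s+1) => Wstar r ω) (astar s) (δ (s+1) ω) from
          funext fun ω => by simpa using hWstart (s+1) (by omega) ω]
        exact (hf (s+1)).comp ((pt_measurable_pi_lambda (mδ' ()) _ (fun r : Fin (s+1) => IH r.1 r.2)).prodMk
          ((pt_measurable_const' (mδ' ()) (astar s)).prodMk (hδmδ (s+1))))
  -- joint measurability of the observed process w.r.t. the (δ, U, η)-algebra
  have hUsup : Measurable[mδ' () ⊔ mH' ()] U :=
    Measurable.of_comap_le (le_sup_left.trans le_sup_right)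
  have hηsup : ∀ s : ℕ, Measurable[mδ' () ⊔ mH' ()] (η s) := fun s =>
    Measurable.of_comap_le ((le_iSup (fun s => MeasurableSpace.comap (η s) inferInstance) s).trans
      (le_sup_right.trans le_sup_right))
  have hδsup : ∀ s : ℕ, Measurable[mδ' () ⊔ mH' ()] (δ s) := fun s =>
    (hδmδ s).mono le_sup_left le_rfl
  have hWA : ∀ s : ℕ, Measurable[mδ' () ⊔ mH' ()] (W s) ∧ Measurable[mδ' () ⊔ mH' ()] (A s) := by
    intro s
    induction s using Nat.strong_induction_on with
    | _ s IH =>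
      have hWmeas : ∀ r, r ≤ s → Measurable[mδ' () ⊔ mH' ()] (W r) := by
        intro r hr
        match r, hr with
        | 0, _ =>
          rw [show W 0 = fun ω => f₀ (δ 0 ω) from funext hW0]
          exact hf₀.comp (hδsup 0)
        | (r+1), hr =>
          rw [show W (r+1) = fun ω =>
              f (r+1) (fun j : Fin (r+1) => W j ω) (A r ω) (δ (r+1) ω) from
            funext fun ω => by simpa using hWt (r+1) (by omega) ω]
          exact (hf (r+1)).comp
            ((pt_measurable_pi_lambda (mδ' () ⊔ mH' ()) _ (fun j : Fin (r+1) => (IH j.1 (lt_of_lt_of_le j.2 hr)).1)).prodMk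
              (((IH r (by omega)).2).prodMk (hδsup (r+1))))
      refine ⟨hWmeas s le_rfl, ?_⟩
      rw [show A s = fun ω =>
          a s (fun r : Fin (s+1) => W r ω) (fun r : Fin s => A r ω) (U ω) (η s ω) from
        funext (hA s)]
      exact (ha s).comp ((pt_measurable_pi_lambda (mδ' () ⊔ mH' ()) _ (fun r : Fin (s+1) => hWmeas r.1 (by omega))).prodMk
        ((pt_measurable_pi_lambda (mδ' () ⊔ mH' ()) _ (fun r : Fin s => (IH r.1 r.2).2)).prodMk (hUsup.prodMk (hηsup s))))
  -- pointwise structural facts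
  have hP1 : ∀ ω (s : ℕ), (∀ r, r < s → A r ω = astar r) → ∀ r, r ≤ s → W r ω = Wstar r ω := by
    intro ω s hs r
    induction r using Nat.strong_induction_on with
    | _ r IH =>
      intro hr
      match r, hr with
      | 0, _ => exact (hWstar0 ω).symm
      | (n+1), hr =>
        rw [hWt (n+1) (by omega) ω, hWstart (n+1) (by omega) ω]
        have h1 : A (n+1-1) ω = astar (n+1-1) := hs _ (by omega)
        rw [h1, show (fun j : Fin (n+1) => W j ω) = (fun j : Fin (n+1) => Wstar j ω) from
          funext fun j => IH j.1 j.2 (by omega)]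
  -- counterfactual treatment process
  set Atil : ℕ → Ω → 𝒜 := fun s ω =>
    a s (fun r : Fin (s+1) => Wstar r ω) (fun r : Fin s => astar r) (U ω) (η s ω) with hAtil
  have hswap : ∀ ω (s : ℕ), (∀ r, r < s → A r ω = astar r) → A s ω = Atil s ω := by
    intro ω s hs
    rw [hA s ω, hAtil]
    rw [show (fun r : Fin (s+1) => W r ω) = fun r : Fin (s+1) => Wstar r ω from
        funext fun r => hP1 ω s hs r.1 (by omega),
      show (fun r : Fin s => A r ω) = fun r : Fin s => astar r from
        funext fun r => hs r.1 r.2]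
  have hP2 : ∀ (m : ℕ) ω, (∀ s, s ≤ m → A s ω = astar s) ↔ (∀ s, s ≤ m → Atil s ω = astar s) := by
    intro m ω
    constructor
    · intro H s hsm
      rw [← hswap ω s fun r hr => H r (by omega)]
      exact H s hsm
    · intro H s
      induction s using Nat.strong_induction_on with
      | _ s IH =>
        intro hsm
        rw [hswap ω s fun r hr => IH r hr (by omega)]
        exact H s hsm
  have hBrep : ∀ m, B m = {ω | ∀ s, s ≤ m → Atil s ω = astar s} := by
    intro m
    rw [hB]
    ext ω
    exact hP2 m ω
  have hWonB : ∀ (m : ℕ) ω, ω ∈ B m → ∀ r, r ≤ m + 1 → W r ω = Wstar r ω := by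
    intro m ω hω r hr
    rw [hB] at hω
    exact hP1 ω (m+1) (fun j hj => hω j (by omega)) r hr
  -- the noise integral vanishes on (δ, U, η)-measurable sets
  have hNoise : ∀ S : Set Ω, MeasurableSet[mδ' () ⊔ mH' ()] S → ∀ s, s ≤ τ →
      ∫ ω in S, e s ω ∂P = 0 := by
    intro S hS s hsτ
    have hS0 : MeasurableSet S := hsuple _ hS
    have hind : IndepFun (S.indicator (fun _ => (1:ℝ))) (e s) P := by
      rw [indepFun_iff_measure_inter_preimage_eq_mul]
      intro u v hu hv
      have h1 : MeasurableSet[mδ' () ⊔ mH' ()] ((S.indicator (fun _ => (1:ℝ))) ⁻¹' u) :=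
        ((pt_measurable_const' (mδ' () ⊔ mH' ()) (1:ℝ)).indicator hS) hu
      have h2 : MeasurableSet[MeasurableSpace.comap (e s) inferInstance] ((e s) ⁻¹' v) :=
        ⟨v, hv, rfl⟩
      exact (Indep_iff _ _ _).1 ((hIndepE s).symm) _ _ h1 h2
    have hprod := hind.integral_mul_eq_mul_integral
      ((integrable_const (1:ℝ)).indicator hS0).aestronglyMeasurable (heint s hsτ).aestronglyMeasurable
    rw [show (S.indicator (fun _ => (1:ℝ))) * (e s) = S.indicator (e s) from
      funext fun ω => by by_cases hω : ω ∈ S <;> simp [Set.indicator, hω]] at hprod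
    rw [← integral_indicator hS0, hprod, hemean s hsτ, mul_zero]
  -- now the actual statement
  intro t ht htτ k hkt hPBk
  -- the counterfactual outcome difference
  set G : Ω → ℝ := fun ω => b t (fun r : Fin (t+1) => Wstar r ω) (astar t)
    - b (t-1) (fun r : Fin (t-1+1) => Wstar r ω) (astar (t-1)) with hG
  have hZG : (fun ω => Ystar t ω - Ystar (t-1) ω) = fun ω => G ω + (e t ω - e (t-1) ω) := by
    funext ω
    rw [hYstar t ω, hYstar (t-1) ω, hG]
    ring
  have hGmδ : Measurable[mδ' ()] G := by
    rw [hG]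
    exact ((hb t).comp ((pt_measurable_pi_lambda (mδ' ()) _ (fun r : Fin (t+1) => hWstarMδ r.1)).prodMk
        (pt_measurable_const' (mδ' ()) (astar t)))).sub
      ((hb (t-1)).comp ((pt_measurable_pi_lambda (mδ' ()) _ (fun r : Fin (t-1+1) => hWstarMδ r.1)).prodMk
        (pt_measurable_const' (mδ' ()) (astar (t-1)))))
  have hGint : Integrable G P := by
    obtain ⟨C₁, hC₁⟩ := hbbd t
    obtain ⟨C₂, hC₂⟩ := hbbd (t-1)
    refine (integrable_const (C₁ + C₂)).mono'
      ((hGmδ.mono hmδle le_rfl).aestronglyMeasurable) (ae_of_all _ fun ω => ?_)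
    rw [hG]
    calc |b t (fun r : Fin (t+1) => Wstar r ω) (astar t)
        - b (t-1) (fun r : Fin (t-1+1) => Wstar r ω) (astar (t-1))|
        ≤ |b t (fun r : Fin (t+1) => Wstar r ω) (astar t)|
          + |b (t-1) (fun r : Fin (t-1+1) => Wstar r ω) (astar (t-1))| := abs_sub _ _
      _ ≤ C₁ + C₂ := add_le_add (hC₁ _ _) (hC₂ _ _)
  have hZint : Integrable (fun ω => Ystar t ω - Ystar (t-1) ω) P := by
    rw [hZG]
    exact hGint.add ((heint t htτ).sub (heint (t-1) (by omega)))
  -- the σ-algebra of counterfactual covariates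
  set WVS : Ω → (Fin (k+1) → 𝒳) := fun ω => fun r : Fin (k+1) => Wstar r ω with hWVS
  set m₁' : Unit → MeasurableSpace Ω := fun _ =>
    MeasurableSpace.comap WVS MeasurableSpace.pi with hm₁'
  have hWVSmδ : Measurable[mδ' ()] WVS :=
    pt_measurable_pi_lambda (mδ' ()) _ (fun r : Fin (k+1) => hWstarMδ r.1)
  have hm₁mδ : m₁' () ≤ mδ' () := pt_comap_le _ _ _ hWVSmδ
  have hm₁ : m₁' () ≤ inst := hm₁mδ.trans hmδle
  haveI : SigmaFinite (P.trim hm₁) := by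
    haveI := isFiniteMeasure_trim (μ := P) hm₁
    infer_instance
  -- condexp of G given the counterfactual covariates, and its factorization
  set F : Ω → ℝ := MeasureTheory.condExp (m₁' ()) P G with hF
  have hFsm : StronglyMeasurable[m₁' ()] F := stronglyMeasurable_condExp
  obtain ⟨ψ, hψ, hFψ⟩ := pt_factor_real WVS hFsm.measurable
  have hFint : Integrable F P := integrable_condExp
  have hFcondexp : ∀ S : Set Ω, MeasurableSet[m₁' ()] S →
      ∫ ω in S, F ω ∂P = ∫ ω in S, G ω ∂P := fun S hS => setIntegral_condExp hm₁ hGint hS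
  -- zero integral of G - F over (m₁ ⊔ mH)-sets
  have hGC : ∀ S : Set Ω, MeasurableSet[m₁' () ⊔ mH' ()] S →
      ∫ ω in S, (G ω - F ω) ∂P = 0 := by
    refine pt_setIntegral_zero_sup P hmδle hmHle hm₁mδ (hGint.sub hFint)
      (hGmδ.sub (hFsm.measurable.mono hm₁mδ le_rfl)) hIndep1 ?_
    intro S hS
    rw [integral_sub (hGint.integrableOn) (hFint.integrableOn), hFcondexp S hS, sub_self]
  -- the candidate function
  -- measurability of the candidate
  have hhmeas : Measurable[𝒲 k] (fun ω => ψ (fun r : Fin (k+1) => W r ω)) := by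
    rw [h𝒲 k]
    exact hψ.comp (pt_of_comap_le _ _ _ le_rfl)
  have h𝒲sup : 𝒲 k ≤ mδ' () ⊔ mH' () := by
    rw [h𝒲 k]
    exact pt_comap_le _ _ _
      (pt_measurable_pi_lambda _ _ (fun r : Fin (k+1) => (hWA r.1).1))
  have h𝒲inst : 𝒲 k ≤ inst := h𝒲sup.trans hsuple
  haveI : SigmaFinite (P.trim h𝒲inst) := by
    haveI := isFiniteMeasure_trim (μ := P) h𝒲inst
    infer_instance
  have hm₁H : m₁' () ⊔ mH' () ≤ inst := sup_le hm₁ hmHle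
  have hm₁HδH : m₁' () ⊔ mH' () ≤ mδ' () ⊔ mH' () := sup_le (hm₁mδ.trans le_sup_left) le_sup_right
  -- measurability of counterfactual treatments w.r.t. m₁ ⊔ mH
  have hWVSm₁ : Measurable[m₁' ()] WVS := pt_of_comap_le _ _ _ le_rfl
  have hUm₁H : Measurable[m₁' () ⊔ mH' ()] U :=
    pt_of_comap_le _ _ _ ((le_sup_left : _ ≤ mH' ()).trans le_sup_right)
  have hηm₁H : ∀ s : ℕ, Measurable[m₁' () ⊔ mH' ()] (η s) := fun s =>
    pt_of_comap_le _ _ _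
      (((le_iSup (fun s => MeasurableSpace.comap (η s) inferInstance) s).trans
        (le_sup_right : _ ≤ mH' ())).trans le_sup_right)
  have hAtilm : ∀ s, s ≤ k → Measurable[m₁' () ⊔ mH' ()] (Atil s) := by
    intro s hsk
    simp only [hAtil]
    refine (ha s).comp (Measurable.prodMk ?_ (Measurable.prodMk
      (pt_measurable_const' _ _) (Measurable.prodMk hUm₁H (hηm₁H s))))
    refine pt_measurable_pi_lambda _ _ (fun r : Fin (s+1) => ?_)
    have h1 : Measurable[m₁' ()] (fun ω => WVS ω (⟨r.1, by omega⟩ : Fin (k+1))) :=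
      (measurable_pi_apply _).comp hWVSm₁
    exact (h1.mono (le_sup_left : _ ≤ m₁' () ⊔ mH' ()) le_rfl : _)
  have hBmeasm₁H : ∀ m, m ≤ k → MeasurableSet[m₁' () ⊔ mH' ()] (B m) := by
    intro m hmk
    rw [hBrep m, show {ω | ∀ s, s ≤ m → Atil s ω = astar s}
        = ⋂ (s : ℕ), ⋂ (_ : s ≤ m), (Atil s) ⁻¹' {astar s} from by ext ω; simp]
    exact pt_iInter _ fun s => pt_iInter _ fun hs =>
      (hAtilm s (hs.trans hmk)) (measurableSet_singleton _)
  have hBamb : ∀ m, MeasurableSet (B m) := by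
    intro m
    rw [hB m, show {ω | ∀ s, s ≤ m → A s ω = astar s}
        = ⋂ (s : ℕ), ⋂ (_ : s ≤ m), (A s) ⁻¹' {astar s} from by ext ω; simp]
    exact MeasurableSet.iInter fun s => MeasurableSet.iInter fun hs =>
      (((hWA s).2).mono hsuple le_rfl) (measurableSet_singleton _)
  -- the central set-integral identity
  have hsetint : ∀ S : Set Ω, MeasurableSet[m₁' () ⊔ mH' ()] S →
      ∫ ω in S, (Ystar t ω - Ystar (t-1) ω) ∂P = ∫ ω in S, F ω ∂P := by
    intro S hS
    have hSδH : MeasurableSet[mδ' () ⊔ mH' ()] S := hm₁HδH _ hS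
    calc ∫ ω in S, (Ystar t ω - Ystar (t-1) ω) ∂P
        = ∫ ω in S, (G ω + (e t ω - e (t-1) ω)) ∂P := by rw [hZG]
      _ = ∫ ω in S, G ω ∂P + ∫ ω in S, (e t ω - e (t-1) ω) ∂P :=
          integral_add hGint.integrableOn
            (((heint t htτ).sub (heint (t-1) (by omega))).integrableOn :
              IntegrableOn (fun ω => e t ω - e (t-1) ω) S P)
      _ = ∫ ω in S, G ω ∂P + (∫ ω in S, e t ω ∂P - ∫ ω in S, e (t-1) ω ∂P) := by
          rw [integral_sub ((heint t htτ).integrableOn) ((heint (t-1) (by omega)).integrableOn)]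
      _ = ∫ ω in S, G ω ∂P := by
          rw [hNoise S hSδH t htτ, hNoise S hSδH (t-1) (by omega)]
          ring
      _ = ∫ ω in S, F ω ∂P := by
          have h0 := hGC S hS
          rw [integral_sub (hGint.integrableOn) (hFint.integrableOn)] at h0
          linarith
  -- the candidate agrees with F wherever observed and counterfactual covariates agree
  have hheqF : ∀ ω, (∀ r, r ≤ k → W r ω = Wstar r ω) →
      ψ (fun r : Fin (k+1) => W r ω) = F ω := by
    intro ω hω
    rw [show (fun r : Fin (k+1) => W r ω) = WVS ω from funext fun r => hω r.1 (by omega)]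
    exact (congrFun hFψ ω).symm
  -- the main claim, for conditioning on B m with k - 1 ≤ m ≤ k
  have hclaim : ∀ m, m ≤ k → k ≤ m + 1 → P (B m) ≠ 0 →
      (fun ω => ψ (fun r : Fin (k+1) => W r ω)) =ᵐ[P[|B m]]
        (P[|B m])[(fun ω => Ystar t ω - Ystar (t-1) ω)|𝒲 k] := by
    intro m hmk hkm hne
    haveI : IsProbabilityMeasure (P[|B m]) := cond_isProbabilityMeasure hne
    haveI : SigmaFinite ((P[|B m]).trim h𝒲inst) := by
      haveI := isFiniteMeasure_trim (μ := P[|B m]) h𝒲inst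
      infer_instance
    have hBm : MeasurableSet (B m) := hBamb m
    have hWeq : ∀ ω ∈ B m, ∀ r, r ≤ k → W r ω = Wstar r ω := fun ω hω r hr =>
      hWonB m ω hω r (by omega)
    have hcond : P[|B m] = (P (B m))⁻¹ • P.restrict (B m) := rfl
    have hinvne : (P (B m))⁻¹ ≠ ⊤ := ENNReal.inv_ne_top.2 hne
    have hZcond : Integrable (fun ω => Ystar t ω - Ystar (t-1) ω) (P[|B m]) := by
      rw [hcond]
      exact (hZint.restrict).smul_measure hinvne
    have hinth : Integrable (fun ω => ψ (fun r : Fin (k+1) => W r ω)) (P[|B m]) := by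
      rw [hcond]
      refine Integrable.smul_measure ?_ hinvne
      refine (hFint.restrict (s := B m)).congr ?_
      exact (ae_restrict_iff' hBm).2 (ae_of_all _ fun ω hω => (hheqF ω (hWeq ω hω)).symm)
    refine ae_eq_condExp_of_forall_setIntegral_eq h𝒲inst hZcond
      (fun s _ _ => hinth.integrableOn) ?_
      (StronglyMeasurable.aestronglyMeasurable hhmeas.stronglyMeasurable)
    intro S hS _
    have hS0 : MeasurableSet S := h𝒲inst _ hS
    have hrs : (P[|B m]).restrict S = (P (B m))⁻¹ • P.restrict (S ∩ B m) := by
      rw [hcond, Measure.restrict_smul, Measure.restrict_restrict hS0]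
    have hS' : MeasurableSet[MeasurableSpace.comap
        (fun ω (r : Fin (k+1)) => W r ω) MeasurableSpace.pi] S := by
      rw [h𝒲 k] at hS
      exact hS
    obtain ⟨T, hT, hTpre⟩ := hS'
    have hSB : S ∩ B m = (WVS ⁻¹' T) ∩ B m := by
      ext ω
      simp only [Set.mem_inter_iff, Set.mem_preimage]
      constructor
      · rintro ⟨hωS, hωB⟩
        refine ⟨?_, hωB⟩
        rw [← hTpre] at hωS
        rw [show WVS ω = (fun r : Fin (k+1) => W r ω) from
          (funext fun (r : Fin (k+1)) => hWeq ω hωB r.1 (by omega) : _ = WVS ω).symm]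
        exact hωS
      · rintro ⟨hωT, hωB⟩
        constructor
        · rw [← hTpre]
          show (fun r : Fin (k+1) => W r ω) ∈ T
          rw [show (fun r : Fin (k+1) => W r ω) = WVS ω from
            funext fun (r : Fin (k+1)) => hWeq ω hωB r.1 (by omega)]
          exact hωT
        · exact hωB
    have hSBm : MeasurableSet[m₁' () ⊔ mH' ()] (S ∩ B m) := by
      rw [hSB]
      exact pt_inter _ ((le_sup_left : m₁' () ≤ m₁' () ⊔ mH' ()) _ ⟨T, hT, rfl⟩)
        (hBmeasm₁H m hmk)
    have hSB0 : MeasurableSet (S ∩ B m) := hS0.inter hBm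
    have hcomp : ∀ (f : Ω → ℝ), ∫ x in S, f x ∂(P[|B m])
        = ((P (B m))⁻¹).toReal • ∫ x in S ∩ B m, f x ∂P := by
      intro f
      rw [show (P[|B m]).restrict S = (P (B m))⁻¹ • P.restrict (S ∩ B m) from hrs,
        integral_smul_measure]
    rw [hcomp, hcomp]
    congr 1
    calc ∫ ω in S ∩ B m, ψ (fun r : Fin (k+1) => W r ω) ∂P
        = ∫ ω in S ∩ B m, F ω ∂P :=
          setIntegral_congr_fun hSB0 (fun ω hω => hheqF ω (hWeq ω hω.2))
      _ = ∫ ω in S ∩ B m, (Ystar t ω - Ystar (t-1) ω) ∂P := (hsetint _ hSBm).symm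
  refine ⟨fun ω => ψ (fun r : Fin (k+1) => W r ω), hhmeas, ?_, ?_⟩
  · by_cases hk0 : k = 0
    · subst hk0
      rw [if_pos rfl]
      have hWeq0 : ∀ ω, (fun r : Fin (0+1) => W r ω) = WVS ω := fun ω => funext fun r => by
        show W (r : ℕ) ω = Wstar (r : ℕ) ω
        have hr : (r : ℕ) = 0 := by omega
        rw [hr]
        exact (hWstar0 ω).symm
      have hheq : (fun ω => ψ (fun r : Fin (0+1) => W r ω)) = F :=
        funext fun ω => by rw [hWeq0 ω]; exact (congrFun hFψ ω).symm
      have h𝒲eq : 𝒲 0 = m₁' () := by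
        rw [h𝒲 0, show (fun ω (r : Fin (0+1)) => W r ω) = WVS from funext hWeq0]
      refine ae_eq_condExp_of_forall_setIntegral_eq h𝒲inst hZint
        (fun s _ _ => by rw [hheq]; exact hFint.integrableOn) ?_
        (StronglyMeasurable.aestronglyMeasurable hhmeas.stronglyMeasurable)
      intro S hS _
      rw [hheq]
      rw [h𝒲eq] at hS
      exact (hsetint S ((le_sup_left : m₁' () ≤ m₁' () ⊔ mH' ()) _ hS)).symm
    · rw [if_neg hk0]
      have hsub : B k ⊆ B (k-1) := by
        rw [hB, hB]
        intro ω hω s hs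
        exact hω s (by omega)
      exact hclaim (k-1) (by omega) (by omega) (hPBk.trans_le (measure_mono hsub)).ne'
  · exact hclaim k le_rfl (by omega) hPBk.ne'
end
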